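/- arXiv:1801.06169 — 4 statements merged into one kernel-verified Lean document; each statement's English description precedes it below -/
import Mathlib

section
/- Let G be a connected graph with d vertices, e edges and minimum degree δ(G) ≥ 2. Then for any integer α with 2 ≤ α ≤ δ(G) and any β ≥ ω(G), c_4(G) ≤ (2e − αd)²/8 · (1 − 1/β) + e(d − α² + 1)/4 + ((α−2)/4)·Σ₂, where Σ₂ = Σ_i deg(i)² and ω(G) is the clique number. -/
open SimpleGraph

variable {V : Type*}

/-- Number of 4-cycle subgraphs of `G`: each 4-cycle corresponds to 8 ordered
tuples `(a,b,c,d)` of vertices with `a~b~c~d~a` and `a ≠ c`, `b ≠ d`. -/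
noncomputable def c4 (G : SimpleGraph V) : ℕ :=
  Nat.card {p : V × V × V × V //
    G.Adj p.1 p.2.1 ∧ G.Adj p.2.1 p.2.2.1 ∧ G.Adj p.2.2.1 p.2.2.2 ∧ G.Adj p.2.2.2 p.1 ∧
    p.1 ≠ p.2.2.1 ∧ p.2.1 ≠ p.2.2.2} / 8

/-- Number of `K₄` subgraphs of `G`, i.e. of 4-element cliques. -/
noncomputable def k4 (G : SimpleGraph V) : ℕ :=
  Nat.card {s : Finset V // G.IsNClique 4 s}

/-- Number of edges of `G`. -/
noncomputable def edgeCount (G : SimpleGraph V) : ℕ := Nat.card G.edgeSet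

/-- Degree of the vertex `v` in `G`. -/
noncomputable def deg (G : SimpleGraph V) (v : V) : ℕ := Nat.card (G.neighborSet v)

/-- Minimum degree of `G`. -/
noncomputable def minDeg (G : SimpleGraph V) : ℕ := sInf (Set.range (deg G))

/-- Maximum degree of `G`. -/
noncomputable def maxDeg (G : SimpleGraph V) : ℕ := sSup (Set.range (deg G))

/-- Clique number of `G`. -/
noncomputable def cliqueNum (G : SimpleGraph V) : ℕ :=
  sSup {n | ∃ s : Finset V, G.IsNClique n s}

/-- `G` has at least one odd cycle. -/
def HasOddCycle (G : SimpleGraph V) : Prop :=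
  ∃ (v : V) (w : G.Walk v v), w.IsCycle ∧ Odd w.length

/-- Number of triangles of `G` containing both vertices `i` and `j`
(for an edge `{i,j}`, the number of common neighbors of `i` and `j`). -/
noncomputable def c3edge (G : SimpleGraph V) (i j : V) : ℕ :=
  Nat.card {k : V // G.Adj i k ∧ G.Adj j k}

/-- Number of 4-cycles of `G` containing the edge `{i,j}`: such a cycle
`i - j - k - l - i` is determined by the ordered pair `(k,l)`. -/
noncomputable def c4edge (G : SimpleGraph V) (i j : V) : ℕ :=
  Nat.card {p : V × V // G.Adj j p.1 ∧ G.Adj p.1 p.2 ∧ G.Adj p.2 i ∧ p.1 ≠ i ∧ p.2 ≠ j}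

/-- Number of 4-cycles of `G` passing through the vertex `v`. -/
noncomputable def c4vertex (G : SimpleGraph V) (v : V) : ℕ :=
  Nat.card {p : V × V × V // G.Adj v p.1 ∧ G.Adj p.1 p.2.1 ∧ G.Adj p.2.1 p.2.2 ∧
    G.Adj p.2.2 v ∧ p.1 ≠ p.2.2 ∧ v ≠ p.2.1} / 2


open Finset

attribute [local instance] Classical.propDecidable

section Aux



noncomputable def Bform [Fintype V] (G : SimpleGraph V) (x y : V → ℚ) : ℚ :=
  ∑ i, ∑ j, (if G.Adj i j then x i * y j else 0)

lemma Bform_add_left [Fintype V] (G : SimpleGraph V) (x x' y : V → ℚ) :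
    Bform G (fun v => x v + x' v) y = Bform G x y + Bform G x' y := by
  unfold Bform
  rw [← Finset.sum_add_distrib]
  refine Finset.sum_congr rfl fun i _ => ?_
  rw [← Finset.sum_add_distrib]
  refine Finset.sum_congr rfl fun j _ => ?_
  split_ifs <;> ring

lemma Bform_smul_left [Fintype V] (G : SimpleGraph V) (t : ℚ) (x y : V → ℚ) :
    Bform G (fun v => t * x v) y = t * Bform G x y := by
  unfold Bform
  rw [Finset.mul_sum]
  refine Finset.sum_congr rfl fun i _ => ?_
  rw [Finset.mul_sum]
  refine Finset.sum_congr rfl fun j _ => ?_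
  split_ifs <;> ring

lemma Bform_sub_left [Fintype V] (G : SimpleGraph V) (x x' y : V → ℚ) :
    Bform G (fun v => x v - x' v) y = Bform G x y - Bform G x' y := by
  have h := Bform_add_left G (fun v => x v - x' v) x' y
  simp only [sub_add_cancel] at h
  linarith

lemma Bform_symm [Fintype V] (G : SimpleGraph V) (x y : V → ℚ) :
    Bform G x y = Bform G y x := by
  unfold Bform
  rw [Finset.sum_comm]
  refine Finset.sum_congr rfl fun i _ => Finset.sum_congr rfl fun j _ => ?_
  rw [SimpleGraph.adj_comm]
  exact if_congr Iff.rfl (mul_comm _ _) rfl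

lemma Bform_single_left [Fintype V] (G : SimpleGraph V) (u : V) (y : V → ℚ) :
    Bform G (fun v => if v = u then 1 else 0) y
      = ∑ j, (if G.Adj u j then y j else 0) := by
  unfold Bform
  rw [Finset.sum_eq_single u]
  · simp
  · exact fun i _ hi => Finset.sum_eq_zero fun j _ => by simp [hi]
  · simp

/-- The shifting step. -/
lemma shift_step [Fintype V] (G : SimpleGraph V) (x : V → ℚ) (hx : ∀ v, 0 ≤ x v)
    (u v : V) (huv : u ≠ v) (hna : ¬ G.Adj u v) (hxu : x u ≠ 0)
    (hs : ∑ j, (if G.Adj v j then x j else 0) ≤ ∑ j, (if G.Adj u j then x j else 0)) :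
    ∃ x' : V → ℚ, (∀ w, 0 ≤ x' w) ∧ (∑ w, x' w = ∑ w, x w) ∧
      Bform G x x ≤ Bform G x' x' ∧
      (Finset.univ.filter (fun w => x' w ≠ 0)) ⊆
        (Finset.univ.filter (fun w => x w ≠ 0)).erase v := by
  classical
  set g : V → ℚ := fun w => (if w = u then (1:ℚ) else 0) - (if w = v then 1 else 0) with hg
  set t : ℚ := x v with ht
  have hgu : g u = 1 := by simp [hg, huv]
  have hgv : g v = -1 := by simp [hg, Ne.symm huv]
  have hgw : ∀ w, w ≠ u → w ≠ v → g w = 0 := fun w h1 h2 => by simp [hg, h1, h2]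
  refine ⟨fun w => x w + t * g w, ?_, ?_, ?_, ?_⟩
  · intro w
    show 0 ≤ x w + t * g w
    by_cases h1 : w = u
    · subst h1
      rw [hgu]
      have := hx w; have := hx v
      nlinarith
    · by_cases h2 : w = v
      · subst h2
        rw [hgv, ht]
        ring_nf
        exact le_refl 0
      · rw [hgw w h1 h2, mul_zero, add_zero]
        exact hx w
  · rw [Finset.sum_add_distrib]
    have h0 : ∑ w, t * g w = 0 := by
      rw [← Finset.mul_sum]
      have : ∑ w, g w = 0 := by
        simp only [hg, Finset.sum_sub_distrib]
        rw [Finset.sum_ite_eq' Finset.univ u (fun _ => (1:ℚ)),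
            Finset.sum_ite_eq' Finset.univ v (fun _ => (1:ℚ))]
        simp
      rw [this, mul_zero]
    rw [h0, add_zero]
  · -- Bform increases
    have hBgx : Bform G g x = (∑ j, (if G.Adj u j then x j else 0)) -
        (∑ j, (if G.Adj v j then x j else 0)) := by
      rw [hg, Bform_sub_left, Bform_single_left, Bform_single_left]
    have hBgg : Bform G g g = 0 := by
      nth_rewrite 1 [hg]
      rw [Bform_sub_left, Bform_single_left, Bform_single_left]
      have h1 : ∑ j, (if G.Adj u j then g j else 0) = 0 := by
        refine Finset.sum_eq_zero fun j _ => ?_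
        by_cases hj : G.Adj u j
        · rw [if_pos hj]
          exact hgw j (fun h => G.irrefl (h ▸ hj)) (fun h => hna (h ▸ hj))
        · rw [if_neg hj]
      have h2 : ∑ j, (if G.Adj v j then g j else 0) = 0 := by
        refine Finset.sum_eq_zero fun j _ => ?_
        by_cases hj : G.Adj v j
        · rw [if_pos hj]
          exact hgw j (fun h => hna (h ▸ hj).symm) (fun h => G.irrefl (h ▸ hj))
        · rw [if_neg hj]
      rw [h1, h2, sub_zero]
    have expand : Bform G (fun w => x w + t * g w) (fun w => x w + t * g w)
        = Bform G x x + 2 * t * Bform G g x + t^2 * Bform G g g := by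
      rw [Bform_add_left]
      rw [show Bform G x (fun w => x w + t * g w)
            = Bform G (fun w => x w + t * g w) x from Bform_symm ..]
      rw [Bform_add_left, Bform_smul_left]
      rw [show Bform G (fun w => t * g w) (fun w => x w + t * g w)
            = t * Bform G g (fun w => x w + t * g w) from Bform_smul_left ..]
      rw [show Bform G g (fun w => x w + t * g w)
            = Bform G (fun w => x w + t * g w) g from Bform_symm ..]
      rw [Bform_add_left]
      rw [show Bform G x g = Bform G g x from Bform_symm ..]
      rw [show Bform G (fun w => t * g w) g = t * Bform G g g from Bform_smul_left ..]
      ring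
    rw [expand, hBgg, hBgx]
    have ht0 : 0 ≤ t := hx v
    nlinarith
  · intro w hw
    simp only [Finset.mem_filter, Finset.mem_univ, true_and] at hw
    replace hw : x w + t * g w ≠ 0 := hw
    have hwv : w ≠ v := by
      intro h; subst h
      apply hw
      rw [hgv, ht]; ring
    refine Finset.mem_erase.mpr ⟨hwv, Finset.mem_filter.mpr ⟨Finset.mem_univ _, ?_⟩⟩
    by_cases hwu : w = u
    · subst hwu
      exact hxu
    · intro h0
      exact hw (by rw [h0, hgw w hwu hwv, mul_zero, add_zero])

lemma motzkin_straus [Fintype V] (G : SimpleGraph V) (ω : ℕ) (hω : 1 ≤ ω)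
    (hcl : ∀ s : Finset V, G.IsClique (s : Set V) → s.card ≤ ω)
    (x : V → ℚ) (hx : ∀ v, 0 ≤ x v) :
    Bform G x x ≤ (1 - 1/(ω:ℚ)) * (∑ v, x v)^2 := by
  classical
  generalize hn : (univ.filter (fun v => x v ≠ 0)).card = n
  induction n using Nat.strong_induction_on generalizing x with
  | _ n ih =>
  set S := univ.filter (fun v => x v ≠ 0) with hS
  have hxS : ∀ w, w ∉ S → x w = 0 := by
    intro w hw
    by_contra h
    exact hw (Finset.mem_filter.mpr ⟨Finset.mem_univ _, h⟩)
  by_cases hcli : G.IsClique (S : Set V)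
  · -- clique case
    have hωQ : (1:ℚ) ≤ (ω:ℚ) := by exact_mod_cast hω
    have hpt : Bform G x x ≤ (∑ v, x v)^2 - ∑ v, (x v)^2 := by
      have hexp : (∑ v, x v)^2 = ∑ i, ∑ j, x i * x j := by
        rw [sq, Finset.sum_mul_sum]
      have hdiag : ∑ v, (x v)^2 = ∑ i, ∑ j, (if j = i then x i * x j else 0) := by
        refine Finset.sum_congr rfl fun i _ => ?_
        rw [Finset.sum_ite_eq' Finset.univ i (fun j => x i * x j)]
        simp [sq]
      rw [hexp, hdiag]
      unfold Bform
      rw [← Finset.sum_sub_distrib]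
      refine Finset.sum_le_sum fun i _ => ?_
      rw [← Finset.sum_sub_distrib]
      refine Finset.sum_le_sum fun j _ => ?_
      by_cases hij : j = i
      · subst hij
        simp [G.irrefl]
      · rw [if_neg hij]
        by_cases hadj : G.Adj i j
        · rw [if_pos hadj]; simp
        · rw [if_neg hadj]
          have := mul_nonneg (hx i) (hx j)
          linarith
    have hsum_eq : ∑ v, x v = ∑ v ∈ S, x v := by
      rw [hS]
      exact (Finset.sum_filter_ne_zero univ).symm
    have hsq_eq : ∑ v, (x v)^2 = ∑ v ∈ S, (x v)^2 := by
      symm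
      refine Finset.sum_subset (Finset.filter_subset _ _) ?_
      intro w _ hw
      rw [hxS w hw]
      ring
    have hcs : (∑ v ∈ S, x v)^2 ≤ (S.card : ℚ) * ∑ v ∈ S, (x v)^2 := by
      have h := Finset.sum_mul_sq_le_sq_mul_sq S x (fun _ => (1:ℚ))
      simp only [mul_one, one_pow] at h
      calc (∑ v ∈ S, x v)^2 ≤ (∑ v ∈ S, (x v)^2) * ∑ v ∈ S, (1:ℚ) := h
        _ = (S.card : ℚ) * ∑ v ∈ S, (x v)^2 := by
            rw [Finset.sum_const, nsmul_eq_mul]; ring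
    have hcard : S.card ≤ ω := hcl S hcli
    by_cases hS0 : S.card = 0
    · -- x is identically zero
      have hx0 : ∀ v, x v = 0 := by
        intro v
        by_contra h
        have : v ∈ S := Finset.mem_filter.mpr ⟨Finset.mem_univ _, h⟩
        rw [Finset.card_eq_zero] at hS0
        simp [hS0] at this
      have : Bform G x x = 0 := by
        unfold Bform
        refine Finset.sum_eq_zero fun i _ => Finset.sum_eq_zero fun j _ => ?_
        rw [hx0 i]
        split_ifs <;> ring
      rw [this]
      have : ∑ v, x v = 0 := Finset.sum_eq_zero fun v _ => hx0 v
      rw [this]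
      ring_nf
      exact le_refl 0
    · have hm1 : (1:ℚ) ≤ (S.card : ℚ) := by
        have : 1 ≤ S.card := Nat.one_le_iff_ne_zero.mpr hS0
        exact_mod_cast this
      have hmω : (S.card : ℚ) ≤ (ω:ℚ) := by exact_mod_cast hcard
      set T := ∑ v, x v with hT
      set Q := ∑ v, (x v)^2 with hQ
      have hkey : T^2 ≤ (S.card : ℚ) * Q := by
        rw [hsum_eq, hsq_eq]; exact hcs
      have hQ0 : 0 ≤ Q := Finset.sum_nonneg fun v _ => sq_nonneg _
      have hTω : T^2 ≤ (ω:ℚ) * Q := le_trans hkey (by nlinarith)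
      have hωpos : (0:ℚ) < (ω:ℚ) := by linarith
      have : T^2 / (ω:ℚ) ≤ Q := by
        rw [div_le_iff₀ hωpos]
        linarith [hTω]
      calc Bform G x x ≤ T^2 - Q := hpt
        _ ≤ T^2 - T^2/(ω:ℚ) := by linarith
        _ = (1 - 1/(ω:ℚ)) * T^2 := by field_simp
  · -- non-clique case: shift
    rw [SimpleGraph.isClique_iff, Set.Pairwise] at hcli
    push_neg at hcli
    obtain ⟨u, hu, v, hv, huv, hna⟩ := hcli
    have hxu : x u ≠ 0 := (Finset.mem_filter.mp (Finset.mem_coe.mp hu)).2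
    have hxv : x v ≠ 0 := (Finset.mem_filter.mp (Finset.mem_coe.mp hv)).2
    have huS : u ∈ S := Finset.mem_filter.mpr ⟨Finset.mem_univ _, hxu⟩
    have hvS : v ∈ S := Finset.mem_filter.mpr ⟨Finset.mem_univ _, hxv⟩
    have key : ∃ x' : V → ℚ, (∀ w, 0 ≤ x' w) ∧ (∑ w, x' w = ∑ w, x w) ∧
        Bform G x x ≤ Bform G x' x' ∧
        (Finset.univ.filter (fun w => x' w ≠ 0)).card < n := by
      rcases le_total (∑ j, (if G.Adj v j then x j else 0))
        (∑ j, (if G.Adj u j then x j else 0)) with hle | hle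
      · obtain ⟨x', h1, h2, h3, h4⟩ := shift_step G x hx u v huv hna hxu hle
        refine ⟨x', h1, h2, h3, ?_⟩
        calc (Finset.univ.filter (fun w => x' w ≠ 0)).card
            ≤ (S.erase v).card := Finset.card_le_card h4
          _ < S.card := by
              rw [Finset.card_erase_of_mem hvS]
              exact Nat.sub_lt (Finset.card_pos.mpr ⟨v, hvS⟩) one_pos
          _ = n := hn
      · obtain ⟨x', h1, h2, h3, h4⟩ := shift_step G x hx v u (Ne.symm huv)
          (fun h => hna h.symm) hxv hle
        refine ⟨x', h1, h2, h3, ?_⟩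
        calc (Finset.univ.filter (fun w => x' w ≠ 0)).card
            ≤ (S.erase u).card := Finset.card_le_card h4
          _ < S.card := by
              rw [Finset.card_erase_of_mem huS]
              exact Nat.sub_lt (Finset.card_pos.mpr ⟨u, huS⟩) one_pos
          _ = n := hn
    obtain ⟨x', h1, h2, h3, h4⟩ := key
    calc Bform G x x ≤ Bform G x' x' := h3
      _ ≤ (1 - 1/(ω:ℚ)) * (∑ v, x' v)^2 := ih _ h4 x' h1 rfl
      _ = (1 - 1/(ω:ℚ)) * (∑ v, x v)^2 := by rw [h2]




lemma tuple_count [Fintype V] (G : SimpleGraph V) :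
    Nat.card {p : V × V × V × V //
      G.Adj p.1 p.2.1 ∧ G.Adj p.2.1 p.2.2.1 ∧ G.Adj p.2.2.1 p.2.2.2 ∧ G.Adj p.2.2.2 p.1 ∧
      p.1 ≠ p.2.2.1 ∧ p.2.1 ≠ p.2.2.2}
    = ∑ i, ∑ j, if G.Adj i j then c4edge G i j else 0 := by
  classical
  set Q : V × V → Type _ := fun q =>
    {r : V × V // G.Adj q.1 q.2 ∧ G.Adj q.2 r.1 ∧ G.Adj r.1 r.2 ∧ G.Adj r.2 q.1 ∧
      r.1 ≠ q.1 ∧ r.2 ≠ q.2} with hQ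
  have E : {p : V × V × V × V //
      G.Adj p.1 p.2.1 ∧ G.Adj p.2.1 p.2.2.1 ∧ G.Adj p.2.2.1 p.2.2.2 ∧ G.Adj p.2.2.2 p.1 ∧
      p.1 ≠ p.2.2.1 ∧ p.2.1 ≠ p.2.2.2} ≃ Σ q : V × V, Q q := by
    refine ⟨fun p => ⟨(p.1.1, p.1.2.1), ⟨(p.1.2.2.1, p.1.2.2.2), ?_⟩⟩,
            fun s => ⟨(s.1.1, s.1.2, s.2.1.1, s.2.1.2), ?_⟩, ?_, ?_⟩
    · obtain ⟨⟨a, b, c, d⟩, h1, h2, h3, h4, h5, h6⟩ := p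
      exact ⟨h1, h2, h3, h4, fun h => h5 h.symm, fun h => h6 h.symm⟩
    · obtain ⟨⟨i, j⟩, ⟨⟨k, l⟩, h1, h2, h3, h4, h5, h6⟩⟩ := s
      exact ⟨h1, h2, h3, h4, fun h => h5 h.symm, fun h => h6 h.symm⟩
    · rintro ⟨⟨a, b, c, d⟩, h⟩; rfl
    · rintro ⟨⟨i, j⟩, ⟨⟨k, l⟩, h⟩⟩; rfl
  rw [Nat.card_congr E, Nat.card_eq_fintype_card, Fintype.card_sigma,
    Fintype.sum_prod_type]
  refine Finset.sum_congr rfl fun i _ => Finset.sum_congr rfl fun j _ => ?_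
  by_cases hij : G.Adj i j
  · rw [if_pos hij]
    have e2 : Q (i, j) ≃ {r : V × V // G.Adj j r.1 ∧ G.Adj r.1 r.2 ∧ G.Adj r.2 i ∧
        r.1 ≠ i ∧ r.2 ≠ j} :=
      Equiv.subtypeEquivRight (fun r => by simp only [hQ]; tauto)
    rw [← Nat.card_eq_fintype_card, Nat.card_congr e2, c4edge]
  · rw [if_neg hij]
    have : IsEmpty (Q (i, j)) := ⟨fun r => hij r.2.1⟩
    exact Fintype.card_eq_zero

lemma c4edge_le [Fintype V] (G : SimpleGraph V) [DecidableRel G.Adj] {i j : V}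
    (hij : G.Adj i j) :
    (c4edge G i j : ℚ) ≤ ((G.degree i : ℚ) - 1) * ((G.degree j : ℚ) - 1)
      - ((G.degree i : ℚ) - 1) - ((G.degree j : ℚ) - 1) + (Fintype.card V : ℚ) - 2 := by
  classical
  set A := (G.neighborFinset j).erase i with hA
  set B := (G.neighborFinset i).erase j with hB
  have hAcard : (A.card : ℚ) = (G.degree j : ℚ) - 1 := by
    have h := Finset.card_erase_add_one ((G.mem_neighborFinset j i).mpr hij.symm)
    rw [← hA] at h
    have : (A.card : ℚ) + 1 = (G.degree j : ℚ) := by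
      rw [← SimpleGraph.card_neighborFinset_eq_degree]
      exact_mod_cast congrArg Nat.cast h
    linarith
  have hBcard : (B.card : ℚ) = (G.degree i : ℚ) - 1 := by
    have h := Finset.card_erase_add_one ((G.mem_neighborFinset i j).mpr hij)
    rw [← hB] at h
    have : (B.card : ℚ) + 1 = (G.degree i : ℚ) := by
      rw [← SimpleGraph.card_neighborFinset_eq_degree]
      exact_mod_cast congrArg Nat.cast h
    linarith
  -- express c4edge as a filter card
  have hc4 : c4edge G i j  = (Finset.univ.filter (fun p : V × V =>
      G.Adj j p.1 ∧ G.Adj p.1 p.2 ∧ G.Adj p.2 i ∧ p.1 ≠ i ∧ p.2 ≠ j)).card := by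
    rw [c4edge, Nat.card_eq_fintype_card, Fintype.card_subtype]
  set F := Finset.univ.filter (fun p : V × V =>
      G.Adj j p.1 ∧ G.Adj p.1 p.2 ∧ G.Adj p.2 i ∧ p.1 ≠ i ∧ p.2 ≠ j) with hF
  -- first inequality
  have n1 : F.card + (A ∩ B).card ≤ A.card * B.card := by
    set D := (A ∩ B).image (fun m => (m, m)) with hD
    have hDcard : D.card = (A ∩ B).card :=
      Finset.card_image_of_injective _ (fun a b h => (Prod.mk.injEq _ _ _ _ ▸ h :
        a = b ∧ a = b).1)
    have hsub : F ∪ D ⊆ A ×ˢ B := by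
      intro p hp
      rcases Finset.mem_union.mp hp with hp | hp
      · simp only [hF, Finset.mem_filter, Finset.mem_univ, true_and] at hp
        obtain ⟨h1, h2, h3, h4, h5⟩ := hp
        refine Finset.mem_product.mpr ⟨?_, ?_⟩
        · exact Finset.mem_erase.mpr ⟨h4, (G.mem_neighborFinset j p.1).mpr h1⟩
        · exact Finset.mem_erase.mpr ⟨h5, (G.mem_neighborFinset i p.2).mpr h3.symm⟩
      · simp only [hD, Finset.mem_image] at hp
        obtain ⟨m, hm, rfl⟩ := hp
        rw [Finset.mem_inter] at hm
        exact Finset.mem_product.mpr ⟨hm.1, hm.2⟩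
    have hdisj : Disjoint F D := by
      rw [Finset.disjoint_left]
      intro p hpF hpD
      simp only [hF, Finset.mem_filter, Finset.mem_univ, true_and] at hpF
      simp only [hD, Finset.mem_image] at hpD
      obtain ⟨m, _, rfl⟩ := hpD
      exact G.irrefl hpF.2.1
    calc F.card + (A ∩ B).card = F.card + D.card := by rw [hDcard]
      _ = (F ∪ D).card := (Finset.card_union_of_disjoint hdisj).symm
      _ ≤ (A ×ˢ B).card := Finset.card_le_card hsub
      _ = A.card * B.card := Finset.card_product A B
  -- second inequality
  have n2 : A.card + B.card + 2 ≤ (A ∩ B).card + Fintype.card V := by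
    have hABij : Disjoint (A ∪ B) ({i, j} : Finset V) := by
      rw [Finset.disjoint_right]
      intro w hw hwAB
      rcases Finset.mem_insert.mp hw with rfl | hw
      · rcases Finset.mem_union.mp hwAB with h | h
        · exact (Finset.mem_erase.mp h).1 rfl
        · exact G.irrefl ((G.mem_neighborFinset w _).mp (Finset.mem_erase.mp h).2)
      · rw [Finset.mem_singleton] at hw
        subst hw
        rcases Finset.mem_union.mp hwAB with h | h
        · exact G.irrefl ((G.mem_neighborFinset w _).mp (Finset.mem_erase.mp h).2)
        · exact (Finset.mem_erase.mp h).1 rfl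
    have hij2 : ({i, j} : Finset V).card = 2 := by
      rw [Finset.card_insert_of_notMem (by simp [hij.ne]), Finset.card_singleton]
    have h1 : (A ∪ B).card + 2 ≤ Fintype.card V := by
      rw [← hij2, ← Finset.card_union_of_disjoint hABij]
      exact Finset.card_le_univ _
    have h2 := Finset.card_union_add_card_inter A B
    omega
  -- combine over ℚ
  rw [hc4]
  have c1 : (F.card : ℚ) + ((A ∩ B).card : ℚ) ≤ (A.card : ℚ) * (B.card : ℚ) := by
    exact_mod_cast n1
  have c2 : (A.card : ℚ) + (B.card : ℚ) + 2 ≤ ((A ∩ B).card : ℚ) + (Fintype.card V : ℚ) := by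
    exact_mod_cast n2
  rw [hAcard, hBcard] at c1 c2
  linarith

end Aux

/-- For a connected graph `G` with `d` vertices, `e` edges and
minimum degree `≥ 2`, for any `2 ≤ α ≤ δ(G)` and any `β ≥ ω(G)`:
`c₄(G) ≤ (2e − αd)²/8 · (1 − 1/β) + e(d − α² + 1)/4 + ((α−2)/4)·Σ₂`. -/
theorem c4_upper_bound [Fintype V] (G : SimpleGraph V) (hconn : G.Connected)
    (hδ2 : 2 ≤ minDeg G) (d e : ℕ) (hd : d = Fintype.card V) (he : e = edgeCount G)
    (α : ℕ) (hα2 : 2 ≤ α) (hαδ : α ≤ minDeg G)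
    (β : ℚ) (hβ : (_root_.cliqueNum G : ℚ) ≤ β) :
    (c4 G : ℚ) ≤ (2 * (e : ℚ) - α * d) ^ 2 / 8 * (1 - 1 / β) +
      (e : ℚ) * ((d : ℚ) - (α : ℚ) ^ 2 + 1) / 4 +
      ((α : ℚ) - 2) / 4 * (∑ v : V, (deg G v : ℚ) ^ 2) := by
  classical
  -- bridges between Nat.card definitions and Mathlib notions
  have hdeg : ∀ v, deg G v = G.degree v := fun v => by
    rw [deg, Nat.card_eq_fintype_card, SimpleGraph.card_neighborSet_eq_degree]
  have hedge : edgeCount G = G.edgeFinset.card := by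
    rw [edgeCount, Nat.card_eq_fintype_card, ← SimpleGraph.edgeFinset_card]
  have hhs : ∑ v, G.degree v = 2 * G.edgeFinset.card :=
    G.sum_degrees_eq_twice_card_edges
  have heQ : 2 * (e : ℚ) = ∑ v, (G.degree v : ℚ) := by
    rw [he, hedge]
    have h2 : ((∑ v, G.degree v : ℕ) : ℚ) = ((2 * G.edgeFinset.card : ℕ) : ℚ) :=
      congrArg _ hhs
    push_cast at h2
    linarith
  have hαdeg : ∀ v, α ≤ G.degree v := fun v =>
    le_trans hαδ (le_of_le_of_eq (Nat.sInf_le ⟨v, rfl⟩) (hdeg v))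
  -- clique number facts
  set W := _root_.cliqueNum G with hW
  have hbdd : BddAbove {n | ∃ s : Finset V, G.IsNClique n s} :=
    ⟨Fintype.card V, fun n ⟨s, hs⟩ => hs.card_eq ▸ Finset.card_le_univ s⟩
  have hW1 : 1 ≤ W := by
    obtain ⟨v⟩ := hconn.nonempty
    exact le_csSup hbdd ⟨{v}, SimpleGraph.isNClique_singleton.mpr rfl⟩
  have hcl : ∀ s : Finset V, G.IsClique (s : Set V) → s.card ≤ W :=
    fun s hs => le_csSup hbdd ⟨s, hs, rfl⟩
  -- the weight function
  set x : V → ℚ := fun v => (G.degree v : ℚ) - α with hx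
  have hx0 : ∀ v, 0 ≤ x v := fun v => by
    have := hαdeg v
    have : (α : ℚ) ≤ (G.degree v : ℚ) := by exact_mod_cast this
    simp only [hx]
    linarith
  have hsumx : ∑ v, x v = 2 * (e : ℚ) - α * d := by
    simp only [hx]
    rw [Finset.sum_sub_distrib, ← heQ, Finset.sum_const, Finset.card_univ, hd]
    push_cast
    ring
  -- Motzkin–Straus
  have hms : Bform G x x ≤ (1 - 1/(W:ℚ)) * (∑ v, x v)^2 :=
    motzkin_straus G W hW1 hcl x hx0
  have hW1Q : (1:ℚ) ≤ (W:ℚ) := by exact_mod_cast hW1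
  have hWβ : (W:ℚ) ≤ β := hβ
  have hms2 : Bform G x x ≤ (1 - 1/β) * (2 * (e : ℚ) - α * d)^2 := by
    have h1 : 1/β ≤ 1/(W:ℚ) := one_div_le_one_div_of_le (by linarith) hWβ
    calc Bform G x x ≤ (1 - 1/(W:ℚ)) * (∑ v, x v)^2 := hms
      _ ≤ (1 - 1/β) * (∑ v, x v)^2 :=
          mul_le_mul_of_nonneg_right (by linarith) (sq_nonneg _)
      _ = (1 - 1/β) * (2 * (e : ℚ) - α * d)^2 := by rw [hsumx]
  -- counting: c4 in terms of c4edge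
  have hc4N : (c4 G : ℚ) ≤ (∑ i, ∑ j, if G.Adj i j then (c4edge G i j : ℚ) else 0) / 8 := by
    have h1 : c4 G = (∑ i, ∑ j, if G.Adj i j then c4edge G i j else 0) / 8 := by
      unfold c4
      rw [tuple_count G]
    rw [h1]
    calc ((( ∑ i, ∑ j, if G.Adj i j then c4edge G i j else 0) / 8 : ℕ) : ℚ)
        ≤ ((∑ i, ∑ j, if G.Adj i j then c4edge G i j else 0 : ℕ) : ℚ) / ((8:ℕ):ℚ) :=
          Nat.cast_div_le
      _ = (∑ i, ∑ j, if G.Adj i j then (c4edge G i j : ℚ) else 0) / 8 := by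
          push_cast
          ring
  -- pointwise bound
  set S2 : ℚ := ∑ i, ∑ j, (if G.Adj i j then ((G.degree i : ℚ) + (G.degree j : ℚ)) else 0)
    with hS2def
  set SE : ℚ := ∑ i, ∑ j, (if G.Adj i j then (1:ℚ) else 0) with hSEdef
  have hpoint : (∑ i, ∑ j, if G.Adj i j then (c4edge G i j : ℚ) else 0)
      ≤ Bform G x x + ((α:ℚ) - 2) * S2 + ((d:ℚ) - (α:ℚ)^2 + 1) * SE := by
    have hexp : Bform G x x + ((α:ℚ) - 2) * S2 + ((d:ℚ) - (α:ℚ)^2 + 1) * SE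
        = ∑ i, ∑ j, (if G.Adj i j then
            (x i * x j + ((α:ℚ) - 2) * ((G.degree i : ℚ) + (G.degree j : ℚ))
              + ((d:ℚ) - (α:ℚ)^2 + 1)) else 0) := by
      rw [Bform, hS2def, hSEdef, Finset.mul_sum, Finset.mul_sum]
      rw [← Finset.sum_add_distrib, ← Finset.sum_add_distrib]
      refine Finset.sum_congr rfl fun i _ => ?_
      rw [Finset.mul_sum, Finset.mul_sum, ← Finset.sum_add_distrib, ← Finset.sum_add_distrib]
      refine Finset.sum_congr rfl fun j _ => ?_
      split_ifs <;> ring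
    rw [hexp]
    refine Finset.sum_le_sum fun i _ => Finset.sum_le_sum fun j _ => ?_
    by_cases hij : G.Adj i j
    · rw [if_pos hij, if_pos hij]
      calc (c4edge G i j : ℚ)
          ≤ ((G.degree i : ℚ) - 1) * ((G.degree j : ℚ) - 1)
            - ((G.degree i : ℚ) - 1) - ((G.degree j : ℚ) - 1) + (Fintype.card V : ℚ) - 2 :=
            c4edge_le G hij
        _ = x i * x j + ((α:ℚ) - 2) * ((G.degree i : ℚ) + (G.degree j : ℚ))
              + ((d:ℚ) - (α:ℚ)^2 + 1) := by
            rw [hd]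
            simp only [hx]
            push_cast
            ring
    · rw [if_neg hij, if_neg hij]
  -- evaluating S2 and SE
  have hdegsum : ∀ (i : V) (c : ℚ), ∑ j, (if G.Adj i j then c else 0)
      = (G.degree i : ℚ) * c := by
    intro i c
    rw [← Finset.sum_filter, Finset.sum_const, ← SimpleGraph.neighborFinset_eq_filter,
      SimpleGraph.card_neighborFinset_eq_degree, nsmul_eq_mul]
  have hS2 : S2 = 2 * ∑ v, (G.degree v : ℚ)^2 := by
    rw [hS2def]
    have hsplit : ∀ i j : V, (if G.Adj i j then ((G.degree i : ℚ) + (G.degree j : ℚ)) else 0)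
        = (if G.Adj i j then (G.degree i : ℚ) else 0)
          + (if G.Adj i j then (G.degree j : ℚ) else 0) := by
      intro i j
      split_ifs <;> ring
    calc ∑ i, ∑ j, (if G.Adj i j then ((G.degree i : ℚ) + (G.degree j : ℚ)) else 0)
        = ∑ i, ∑ j, ((if G.Adj i j then (G.degree i : ℚ) else 0)
            + (if G.Adj i j then (G.degree j : ℚ) else 0)) := by
          exact Finset.sum_congr rfl fun i _ => Finset.sum_congr rfl fun j _ => hsplit i j
      _ = (∑ i, ∑ j, (if G.Adj i j then (G.degree i : ℚ) else 0))
          + ∑ i, ∑ j, (if G.Adj i j then (G.degree j : ℚ) else 0) := by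
          rw [← Finset.sum_add_distrib]
          exact Finset.sum_congr rfl fun i _ => Finset.sum_add_distrib
      _ = 2 * ∑ v, (G.degree v : ℚ)^2 := by
          have e1 : (∑ i, ∑ j, (if G.Adj i j then (G.degree i : ℚ) else 0))
              = ∑ v, (G.degree v : ℚ)^2 := by
            refine Finset.sum_congr rfl fun i _ => ?_
            rw [hdegsum i]
            ring
          have e2 : (∑ i, ∑ j, (if G.Adj i j then (G.degree j : ℚ) else 0))
              = ∑ v, (G.degree v : ℚ)^2 := by
            rw [Finset.sum_comm]
            refine Finset.sum_congr rfl fun j _ => ?_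
            have : ∀ i : V, (if G.Adj i j then (G.degree j : ℚ) else 0)
                = (if G.Adj j i then (G.degree j : ℚ) else 0) := by
              intro i
              rw [SimpleGraph.adj_comm]
            rw [Finset.sum_congr rfl fun i _ => this i, hdegsum j]
            ring
          rw [e1, e2]
          ring
  have hSE : SE = 2 * (e:ℚ) := by
    rw [hSEdef]
    have : ∀ i : V, ∑ j, (if G.Adj i j then (1:ℚ) else 0) = (G.degree i : ℚ) := by
      intro i
      rw [hdegsum i, mul_one]
    rw [Finset.sum_congr rfl fun i _ => this i, ← heQ]
  -- final assembly
  have hfin : (∑ i, ∑ j, if G.Adj i j then (c4edge G i j : ℚ) else 0)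
      ≤ (1 - 1/β) * (2 * (e : ℚ) - α * d)^2
        + ((α:ℚ) - 2) * (2 * ∑ v, (G.degree v : ℚ)^2)
        + ((d:ℚ) - (α:ℚ)^2 + 1) * (2 * (e:ℚ)) := by
    calc (∑ i, ∑ j, if G.Adj i j then (c4edge G i j : ℚ) else 0)
        ≤ Bform G x x + ((α:ℚ) - 2) * S2 + ((d:ℚ) - (α:ℚ)^2 + 1) * SE := hpoint
      _ ≤ (1 - 1/β) * (2 * (e : ℚ) - α * d)^2 + ((α:ℚ) - 2) * S2
            + ((d:ℚ) - (α:ℚ)^2 + 1) * SE := by linarith [hms2]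
      _ = (1 - 1/β) * (2 * (e : ℚ) - α * d)^2
            + ((α:ℚ) - 2) * (2 * ∑ v, (G.degree v : ℚ)^2)
            + ((d:ℚ) - (α:ℚ)^2 + 1) * (2 * (e:ℚ)) := by rw [hS2, hSE]
  have hdegrw : (∑ v : V, (deg G v : ℚ) ^ 2) = ∑ v, (G.degree v : ℚ)^2 := by
    refine Finset.sum_congr rfl fun v _ => ?_
    rw [hdeg v]
  rw [hdegrw]
  linarith [hc4N, hfin]
end

section
/- Let G be a connected graph with d vertices and e edges having at least one odd cycle and minimum degree δ(G) ≥ 12. Then c_4(G) ≤ C(e-d+1, 2). -/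
open SimpleGraph

variable {V : Type*}

open Finset in
/-- A connected graph `G` with `d` vertices, `e` edges, at least
one odd cycle and minimum degree `≥ 12` satisfies `c₄(G) ≤ C(e-d+1, 2)`. -/
theorem c4_deg_twelve [Fintype V] (G : SimpleGraph V) (hconn : G.Connected)
    (hodd : HasOddCycle G) (d e : ℕ) (hd : d = Fintype.card V) (he : e = edgeCount G)
    (hδ : 12 ≤ minDeg G) :
    c4 G ≤ Nat.choose (e + 1 - d) 2 := by
  classical
  set n : ℕ := Fintype.card V with hn
  -- all degrees ≥ 12
  have hdeg : ∀ v, 12 ≤ G.degree v := by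
    intro v
    have h1 : deg G v = G.degree v := by
      simp [deg, Nat.card_eq_fintype_card, degree, neighborFinset_eq_filter]
    have h2 : minDeg G ≤ deg G v := Nat.sInf_le ⟨v, rfl⟩
    omega
  have hVne : Nonempty V := hconn.nonempty
  obtain ⟨v0⟩ := hVne
  have hn13 : 13 ≤ n := by
    have := G.degree_lt_card_verts v0
    have := hdeg v0
    omega
  have hsum : ∑ v, G.degree v = 2 * e := by
    rw [he, show edgeCount G = G.edgeFinset.card by
      rw [edgeCount, ← SimpleGraph.coe_edgeFinset, Nat.card_coe_set_eq, Set.ncard_coe_finset]]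
    exact G.sum_degrees_eq_twice_card_edges
  have hen : n ≤ e := by
    have h12 : 12 * n ≤ ∑ v, G.degree v := by
      calc 12 * n = ∑ _v : V, 12 := by simp [mul_comm, hn]
      _ ≤ ∑ v, G.degree v := Finset.sum_le_sum (fun v _ => hdeg v)
    omega
  -- the tuple predicate and its count
  set P : V × V × V × V → Prop := fun p =>
    G.Adj p.1 p.2.1 ∧ G.Adj p.2.1 p.2.2.1 ∧ G.Adj p.2.2.1 p.2.2.2 ∧ G.Adj p.2.2.2 p.1 ∧
    p.1 ≠ p.2.2.1 ∧ p.2.1 ≠ p.2.2.2 with hP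
  set N : ℕ := (univ.filter P).card with hNdef
  have hc4 : c4 G = N / 8 := by
    have : Nat.card {p : V × V × V × V // P p} = N := by
      rw [Nat.card_eq_fintype_card]
      simp [hNdef, Fintype.card_subtype]
    rw [c4, ← this]
  -- integer degree and the pair weight ψ
  set dg : V → ℤ := fun v => (G.degree v : ℤ) with hdg
  set ψ : V → V → ℤ := fun i j => (dg i - 1) * (dg j - 1) - dg i - dg j + (n : ℤ) with hψ
  have hdg12 : ∀ v, (12 : ℤ) ≤ dg v := by
    intro v
    simp only [hdg]
    exact_mod_cast hdeg v
  -- fiber decomposition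
  have hN : N = ∑ x : V × V, ((univ.filter P).filter (fun p => (p.1, p.2.1) = x)).card := by
    exact Finset.card_eq_sum_card_fiberwise (fun p _ => mem_univ _)
  -- per-fiber bound
  have key : ∀ x : V × V, (((univ.filter P).filter (fun p => (p.1, p.2.1) = x)).card : ℤ)
      ≤ if G.Adj x.1 x.2 then ψ x.1 x.2 else 0 := by
    rintro ⟨i, j⟩
    by_cases hadj : G.Adj i j
    · simp only [hadj, if_true]
      set A := (G.neighborFinset j).erase i with hA
      set B := (G.neighborFinset i).erase j with hB
      set C := G.neighborFinset i ∩ G.neighborFinset j with hC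
      set Δ := C.image (fun k => (k, k)) with hΔ
      have hΔsub : Δ ⊆ A ×ˢ B := by
        intro x hx
        simp only [hΔ, Finset.mem_image] at hx
        obtain ⟨k, hk, rfl⟩ := hx
        simp only [hC, Finset.mem_inter, mem_neighborFinset] at hk
        simp only [Finset.mem_product, hA, hB, Finset.mem_erase, mem_neighborFinset]
        exact ⟨⟨hk.1.ne', hk.2⟩, ⟨hk.2.ne', hk.1⟩⟩
      have hmap : ∀ p ∈ (univ.filter P).filter (fun p => (p.1, p.2.1) = (i, j)),
          (p.2.2.1, p.2.2.2) ∈ (A ×ˢ B) \ Δ := by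
        intro p hp
        rw [Finset.mem_filter, Finset.mem_filter] at hp
        obtain ⟨⟨-, hPp⟩, hpij⟩ := hp
        have h1 : p.1 = i := congrArg Prod.fst hpij
        have h2 : p.2.1 = j := congrArg (fun q : V × V => q.2) hpij
        obtain ⟨hab, hbc, hcd, hda, hac, hbd⟩ := hPp
        rw [Finset.mem_sdiff, Finset.mem_product]
        refine ⟨⟨?_, ?_⟩, ?_⟩
        · simp only [hA, Finset.mem_erase, mem_neighborFinset]
          exact ⟨by rw [← h1]; exact fun hh => hac hh.symm, h2 ▸ hbc⟩
        · simp only [hB, Finset.mem_erase, mem_neighborFinset]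
          exact ⟨by rw [← h2]; exact fun hh => hbd hh.symm, (h1 ▸ hda).symm⟩
        · simp only [hΔ, Finset.mem_image, not_exists]
          intro k hk
          have e1 := congrArg Prod.fst hk.2
          have e2 := congrArg Prod.snd hk.2
          simp only at e1 e2
          exact hcd.ne (e1.symm.trans e2)
      have hinj : Set.InjOn (fun p : V × V × V × V => (p.2.2.1, p.2.2.2))
          ((univ.filter P).filter (fun p => (p.1, p.2.1) = (i, j))) := by
        intro p hp q hq hpq
        simp only [Finset.coe_filter, Set.mem_setOf_eq] at hp hq
        have hp1 : p.1 = i := congrArg Prod.fst hp.2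
        have hp2 : p.2.1 = j := congrArg (fun q : V × V => q.2) hp.2
        have hq1 : q.1 = i := congrArg Prod.fst hq.2
        have hq2 : q.2.1 = j := congrArg (fun q : V × V => q.2) hq.2
        have hc : p.2.2.1 = q.2.2.1 := congrArg Prod.fst hpq
        have hd2 : p.2.2.2 = q.2.2.2 := congrArg Prod.snd hpq
        have : p.2 = q.2 := by
          have : p.2.2 = q.2.2 := Prod.ext hc hd2
          exact Prod.ext (hp2.trans hq2.symm) this
        exact Prod.ext (hp1.trans hq1.symm) this
      have hcard1 : ((univ.filter P).filter (fun p => (p.1, p.2.1) = (i, j))).card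
          ≤ ((A ×ˢ B) \ Δ).card :=
        Finset.card_le_card_of_injOn _ hmap hinj
      have hΔcard : Δ.card = C.card := by
        rw [hΔ]
        exact Finset.card_image_of_injective _ (fun a b h => (Prod.mk.injEq a a b b ▸ h : _ ∧ _).1)
      have hcard2 : ((A ×ˢ B) \ Δ).card = A.card * B.card - C.card := by
        rw [Finset.card_sdiff_of_subset hΔsub, Finset.card_product, hΔcard]
      have hCle : C.card ≤ A.card * B.card := by
        rw [← hΔcard, ← Finset.card_product]
        exact Finset.card_le_card hΔsub
      have hAcard : A.card = G.degree j - 1 := by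
        rw [hA, Finset.card_erase_of_mem (by rw [mem_neighborFinset]; exact hadj.symm)]
        rfl
      have hBcard : B.card = G.degree i - 1 := by
        rw [hB, Finset.card_erase_of_mem (by rw [mem_neighborFinset]; exact hadj)]
        rfl
      have hC_lb : dg i + dg j - (n : ℤ) ≤ (C.card : ℤ) := by
        have h1 : C.card + (G.neighborFinset i ∪ G.neighborFinset j).card
            = G.degree i + G.degree j := Finset.card_inter_add_card_union _ _
        have h2 : (G.neighborFinset i ∪ G.neighborFinset j).card ≤ n := by
          rw [hn]
          exact (Finset.card_le_univ _).trans (le_of_eq (Finset.card_univ))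
        have h3 : G.degree i + G.degree j ≤ C.card + n := by omega
        have h4 : (G.degree i : ℤ) + G.degree j ≤ (C.card : ℤ) + n := by exact_mod_cast h3
        simp only [hdg]
        linarith
      have hcast : ((A.card * B.card - C.card : ℕ) : ℤ)
          = (dg j - 1) * (dg i - 1) - (C.card : ℤ) := by
        rw [Nat.cast_sub hCle]
        have hdi := hdeg i
        have hdj := hdeg j
        rw [hAcard, hBcard]
        push_cast [Nat.cast_sub (by omega : 1 ≤ G.degree j), Nat.cast_sub (by omega : 1 ≤ G.degree i)]
        simp [hdg]
      calc (((univ.filter P).filter (fun p => (p.1, p.2.1) = (i, j))).card : ℤ)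
          ≤ ((((A ×ˢ B) \ Δ).card : ℕ) : ℤ) := by exact_mod_cast hcard1
        _ = (dg j - 1) * (dg i - 1) - (C.card : ℤ) := by rw [hcard2, hcast]
        _ ≤ ψ i j := by simp only [hψ]; nlinarith [hC_lb, hdg12 i, hdg12 j]
    · simp only [hadj, if_false]
      have : ((univ.filter P).filter (fun p => (p.1, p.2.1) = (i, j))) = ∅ := by
        rw [Finset.filter_eq_empty_iff]
        rintro p hp hpij
        rw [Finset.mem_filter] at hp
        have h1 : p.1 = i := congrArg Prod.fst hpij
        have h2 : p.2.1 = j := congrArg (fun q : V × V => q.2) hpij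
        exact hadj (h1 ▸ h2 ▸ hp.2.1)
      rw [this, Finset.card_empty]
      norm_num
  -- sums of degrees as integers
  set S1 : ℤ := ∑ v, dg v with hS1def
  set S2 : ℤ := ∑ v, (dg v) ^ 2 with hS2def
  have hS1 : S1 = 2 * (e : ℤ) := by
    rw [hS1def]
    simp only [hdg]
    rw [← Nat.cast_sum]
    exact_mod_cast congrArg (Nat.cast : ℕ → ℤ) hsum
  -- N bounded by the sum of ifs
  have hNle : (N : ℤ) ≤ ∑ x : V × V, (if G.Adj x.1 x.2 then ψ x.1 x.2 else 0) := by
    rw [hN]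
    push_cast
    exact Finset.sum_le_sum (fun x _ => key x)
  -- split the if
  have hsplit : ∀ x : V × V, (if G.Adj x.1 x.2 then ψ x.1 x.2 else 0)
      = (if x.1 ≠ x.2 then ψ x.1 x.2 else 0)
        - (if (x.1 ≠ x.2 ∧ ¬ G.Adj x.1 x.2) then ψ x.1 x.2 else 0) := by
    intro x
    by_cases h1 : G.Adj x.1 x.2
    · simp [h1, h1.ne]
    · by_cases h2 : x.1 = x.2 <;> simp [h1, h2]
  -- pointwise lower bound on the non-adjacent part
  have hpoint : ∀ x : V × V, (if (x.1 ≠ x.2 ∧ ¬ G.Adj x.1 x.2) then ((n:ℤ) - 3 + dg x.2) else 0)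
      ≤ (if (x.1 ≠ x.2 ∧ ¬ G.Adj x.1 x.2) then ψ x.1 x.2 else 0) := by
    intro x
    by_cases h : (x.1 ≠ x.2 ∧ ¬ G.Adj x.1 x.2)
    · rw [if_pos h, if_pos h]
      have h1 := hdg12 x.1
      have h2 := hdg12 x.2
      simp only [hψ]
      nlinarith [mul_nonneg (by linarith : (0:ℤ) ≤ dg x.1 - 12) (by linarith : (0:ℤ) ≤ dg x.2 - 2)]
    · simp [h]
  have hNle2 : (N : ℤ) ≤ (∑ x : V × V, (if x.1 ≠ x.2 then ψ x.1 x.2 else 0))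
      - ∑ x : V × V, (if (x.1 ≠ x.2 ∧ ¬ G.Adj x.1 x.2) then ((n:ℤ) - 3 + dg x.2) else 0) := by
    calc (N : ℤ) ≤ ∑ x : V × V, (if G.Adj x.1 x.2 then ψ x.1 x.2 else 0) := hNle
      _ = (∑ x : V × V, (if x.1 ≠ x.2 then ψ x.1 x.2 else 0))
          - ∑ x : V × V, (if (x.1 ≠ x.2 ∧ ¬ G.Adj x.1 x.2) then ψ x.1 x.2 else 0) := by
          rw [← Finset.sum_sub_distrib]
          exact Finset.sum_congr rfl (fun x _ => hsplit x)
      _ ≤ _ := by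
          have := Finset.sum_le_sum (fun x (_ : x ∈ (univ : Finset (V × V))) => hpoint x)
          linarith
  -- row sums of ψ
  have hrow : ∀ i : V, ∑ j, ψ i j
      = (dg i - 1) * (S1 - (n:ℤ)) - (n:ℤ) * dg i - S1 + (n:ℤ) * (n:ℤ) := by
    intro i
    simp only [hψ, hS1def]
    rw [Finset.sum_add_distrib, Finset.sum_sub_distrib, Finset.sum_sub_distrib,
      ← Finset.mul_sum, Finset.sum_sub_distrib, Finset.sum_const, Finset.sum_const,
      Finset.sum_const, Finset.card_univ, nsmul_eq_mul, nsmul_eq_mul, nsmul_eq_mul]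
    push_cast
    ring
  have hψtotal : ∑ x : V × V, ψ x.1 x.2
      = (S1 - n) * (S1 - n) - 2 * (n:ℤ) * S1 + (n:ℤ)^3 := by
    rw [Fintype.sum_prod_type]
    rw [Finset.sum_congr rfl (fun i _ => hrow i)]
    rw [Finset.sum_add_distrib, Finset.sum_sub_distrib, Finset.sum_sub_distrib,
      ← Finset.sum_mul, Finset.sum_sub_distrib, ← Finset.mul_sum, Finset.sum_const,
      Finset.sum_const, Finset.sum_const, Finset.card_univ, nsmul_eq_mul, nsmul_eq_mul,
      nsmul_eq_mul, ← hS1def]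
    ring
  have hdiag : ∑ x : V × V, (if x.1 = x.2 then ψ x.1 x.2 else 0)
      = S2 - 4 * S1 + (n:ℤ) + (n:ℤ)^2 := by
    rw [Fintype.sum_prod_type]
    have h1 : ∀ i : V, ∑ j, (if i = j then ψ i j else 0) = ψ i i := by
      intro i
      rw [Finset.sum_ite_eq univ i (fun j => ψ i j)]
      exact if_pos (mem_univ i)
    rw [Finset.sum_congr rfl (fun i _ => h1 i)]
    have h2 : ∀ i : V, ψ i i = dg i ^ 2 - 4 * dg i + (1 + (n:ℤ)) := by
      intro i
      simp only [hψ]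
      ring
    rw [Finset.sum_congr rfl (fun i _ => h2 i)]
    rw [Finset.sum_add_distrib, Finset.sum_sub_distrib, ← Finset.mul_sum, Finset.sum_const,
      Finset.card_univ, nsmul_eq_mul, ← hS1def, ← hS2def]
    ring
  have hsumA : ∑ x : V × V, (if x.1 ≠ x.2 then ψ x.1 x.2 else 0)
      = (S1 - n) * (S1 - n) - 2 * (n:ℤ) * S1 + (n:ℤ)^3 - (S2 - 4 * S1 + (n:ℤ) + (n:ℤ)^2) := by
    have hpt : ∀ x : V × V, (if x.1 ≠ x.2 then ψ x.1 x.2 else 0)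
        = ψ x.1 x.2 - (if x.1 = x.2 then ψ x.1 x.2 else 0) := by
      intro x
      by_cases hxy : x.1 = x.2 <;> simp [hxy]
    rw [Finset.sum_congr rfl (fun x _ => hpt x), Finset.sum_sub_distrib, hψtotal, hdiag]
  -- counting non-neighbours
  have hcnt : ∀ j : V, ((univ.filter (fun i => i ≠ j ∧ ¬ G.Adj i j)).card : ℤ)
      = (n:ℤ) - 1 - dg j := by
    intro j
    have heq : univ.filter (fun i => i ≠ j ∧ ¬ G.Adj i j)
        = univ \ insert j (G.neighborFinset j) := by
      ext i
      simp only [Finset.mem_filter, Finset.mem_univ, true_and, Finset.mem_sdiff,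
        Finset.mem_insert, mem_neighborFinset, not_or]
      constructor
      · rintro ⟨h1, h2⟩
        exact ⟨h1, fun hji => h2 (G.adj_symm hji)⟩
      · rintro ⟨h1, h2⟩
        exact ⟨h1, fun hij => h2 (G.adj_symm hij)⟩
    rw [heq, Finset.card_sdiff_of_subset (Finset.subset_univ _), Finset.card_univ,
      Finset.card_insert_of_notMem (by simp [mem_neighborFinset])]
    have hlt : G.degree j + 1 ≤ Fintype.card V := G.degree_lt_card_verts j
    have : (G.neighborFinset j).card = G.degree j := rfl
    rw [this]
    rw [Nat.cast_sub hlt]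
    push_cast [hdg]
    ring
  have hsumB : ∑ x : V × V, (if (x.1 ≠ x.2 ∧ ¬ G.Adj x.1 x.2) then ((n:ℤ) - 3 + dg x.2) else 0)
      = ∑ j, ((n:ℤ) - 3 + dg j) * ((n:ℤ) - 1 - dg j) := by
    rw [Fintype.sum_prod_type, Finset.sum_comm]
    refine Finset.sum_congr rfl (fun j _ => ?_)
    have h1 : ∀ i, (if (i ≠ j ∧ ¬ G.Adj i j) then ((n:ℤ) - 3 + dg j) else 0)
        = (if (i ≠ j ∧ ¬ G.Adj i j) then (1:ℤ) else 0) * ((n:ℤ) - 3 + dg j) := by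
      intro i
      split <;> simp
    rw [Finset.sum_congr rfl (fun i _ => h1 i), ← Finset.sum_mul, Finset.sum_boole, hcnt j]
    ring
  have hsumB2 : ∑ j, ((n:ℤ) - 3 + dg j) * ((n:ℤ) - 1 - dg j)
      = (n:ℤ) * ((n:ℤ) - 3) * ((n:ℤ) - 1) + 2 * S1 - S2 := by
    have hpt : ∀ j : V, ((n:ℤ) - 3 + dg j) * ((n:ℤ) - 1 - dg j)
        = ((n:ℤ) - 3) * ((n:ℤ) - 1) + (dg j + dg j) - dg j ^ 2 := by
      intro j
      ring
    rw [Finset.sum_congr rfl (fun j _ => hpt j), Finset.sum_sub_distrib,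
      Finset.sum_add_distrib, Finset.sum_add_distrib, Finset.sum_const, Finset.card_univ,
      nsmul_eq_mul, ← hS1def, ← hS2def]
    ring
  -- the final integer bound
  have hfinal : (N : ℤ) ≤ 4 * ((e:ℤ) - n + 1) * ((e:ℤ) - n) := by
    rw [hsumA, hsumB, hsumB2] at hNle2
    have hrw : (S1 - n) * (S1 - n) - 2 * (n:ℤ) * S1 + (n:ℤ)^3
        - (S2 - 4 * S1 + (n:ℤ) + (n:ℤ)^2)
        - ((n:ℤ) * ((n:ℤ) - 3) * ((n:ℤ) - 1) + 2 * S1 - S2)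
        = 4 * ((e:ℤ) - n + 1) * ((e:ℤ) - n) := by
      rw [hS1]
      ring
    linarith [hNle2, hrw.ge, hrw.le]
  -- conclude in ℕ
  have hNnat : N ≤ 4 * (((e - n) + 1) * (e - n)) := by
    have hcast : ((4 * (((e - n) + 1) * (e - n)) : ℕ) : ℤ)
        = 4 * ((e:ℤ) - n + 1) * ((e:ℤ) - n) := by
      push_cast [Nat.cast_sub hen]
      ring
    exact_mod_cast hfinal.trans_eq hcast.symm
  rw [hc4, hd]
  have hm : e + 1 - n = (e - n) + 1 := by omega
  rw [hm, Nat.choose_two_right]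
  calc N / 8 ≤ (4 * (((e - n) + 1) * (e - n))) / 8 := Nat.div_le_div_right hNnat
    _ = (((e - n) + 1) * (e - n)) / 2 := by
        rw [show (8:ℕ) = 4 * 2 from rfl, Nat.mul_div_mul_left _ 2 (by norm_num)]
    _ = ((e - n) + 1) * ((e - n) + 1 - 1) / 2 := by rw [Nat.add_sub_cancel]
end

section
/- Let G be a graph and v a vertex of degree δ whose neighbors are v₁,...,v_δ, with Δ(G) ≤ d−2 where d is the number of vertices. Then the number of 4-cycles of G passing through v is at most (d−4)·C(δ,2) + ⌊δ/2⌋. -/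
open SimpleGraph

variable {V : Type*}

open Finset

lemma even_card_of_involution' {α : Type*} [DecidableEq α] :
    ∀ (P : Finset α) (f : α → α), (∀ a ∈ P, f a ∈ P) → (∀ a ∈ P, f (f a) = a) →
    (∀ a ∈ P, f a ≠ a) → Even P.card := by
  intro P
  induction P using Finset.strongInductionOn with
  | _ P ih =>
    intro f hmem hinv hne
    rcases P.eq_empty_or_nonempty with rfl | ⟨a, ha⟩
    · simp
    · have hfa := hmem a ha
      have hne' := hne a ha
      have h2 : ({a, f a} : Finset α) ⊆ P := by
        intro x hx
        simp only [mem_insert, mem_singleton] at hx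
        rcases hx with rfl | rfl <;> assumption
      have hcard2 : ({a, f a} : Finset α).card = 2 := by
        rw [card_insert_of_notMem (by simp [Ne.symm hne']), card_singleton]
      set Q := P \ {a, f a} with hQdef
      have hQss : Q ⊂ P := by
        refine Finset.ssubset_iff_of_subset sdiff_subset |>.mpr ⟨a, ha, ?_⟩
        simp [hQdef]
      have hQmem : ∀ b ∈ Q, f b ∈ Q := by
        intro b hb
        simp only [hQdef, mem_sdiff, mem_insert, mem_singleton, not_or] at hb ⊢
        obtain ⟨hbP, hba, hbfa⟩ := hb
        refine ⟨hmem b hbP, ?_, ?_⟩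
        · intro h
          have : f (f b) = f a := by rw [h]
          rw [hinv b hbP] at this
          exact hbfa this
        · intro h
          have : f (f b) = f (f a) := by rw [h]
          rw [hinv b hbP, hinv a ha] at this
          exact hba this
      have hQeven : Even Q.card :=
        ih Q hQss f hQmem (fun b hb => hinv b (sdiff_subset hb))
          (fun b hb => hne b (sdiff_subset hb))
      have : P.card = Q.card + 2 := by
        rw [hQdef, card_sdiff_of_subset h2, hcard2]
        have := Finset.card_le_card h2
        omega
      rw [this]
      exact hQeven.add (by decide)

/-- Let `G` be a graph on `d` vertices with `Δ(G) ≤ d − 2` and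
`v` a vertex of degree `δ`. Then the number of 4-cycles of `G` through `v` is
at most `(d−4)·C(δ,2) + ⌊δ/2⌋`. -/
theorem c4vertex_bound [Fintype V] (G : SimpleGraph V) (d : ℕ)
    (hd : d = Fintype.card V) (hΔ : maxDeg G ≤ d - 2) (v : V) (δ : ℕ)
    (hδ : δ = deg G v) :
    c4vertex G v ≤ (d - 4) * Nat.choose δ 2 + δ / 2 := by
  classical
  -- deg = degree
  have hdeg : ∀ w : V, deg G w = G.degree w := by
    intro w
    rw [deg, Nat.card_eq_fintype_card, G.card_neighborSet_eq_degree]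
  have hmax : ∀ w : V, G.degree w ≤ d - 2 := by
    intro w
    refine le_trans ?_ hΔ
    rw [← hdeg w]
    exact le_csSup (Set.Finite.bddAbove (Set.finite_range _)) ⟨w, rfl⟩
  set N : Finset V := G.neighborFinset v with hNdef
  have hNcard : N.card = δ := by rw [hδ, hdeg]; rfl
  set S : V → V → Finset V :=
    fun i j => Finset.univ.filter (fun k => G.Adj i k ∧ G.Adj j k ∧ k ≠ v) with hSdef
  -- Step 1 : c4vertex = (∑ over offDiag of |S|) / 2
  set X : ℕ := ∑ q ∈ N.offDiag, (S q.1 q.2).card with hXdef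
  have hc4 : c4vertex G v = X / 2 := by
    rw [c4vertex]
    congr 1
    rw [Nat.card_eq_fintype_card, Fintype.card_subtype]
    rw [Finset.card_eq_sum_card_fiberwise (f := fun p : V × V × V => (p.1, p.2.2))
      (t := N.offDiag) ?_]
    · refine Finset.sum_congr rfl ?_
      rintro ⟨a, c⟩ hq
      simp only [mem_offDiag, hNdef, mem_neighborFinset] at hq
      obtain ⟨hva, hvc, hac⟩ := hq
      apply Finset.card_bij (fun p _ => p.2.1)
      · rintro ⟨a', b, c'⟩ hp
        simp only [mem_filter, mem_univ, true_and, Prod.mk.injEq] at hp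
        obtain ⟨⟨_, hab, hbc, _, _, hvb⟩, rfl, rfl⟩ := hp
        simp only [hSdef, mem_filter, mem_univ, true_and]
        exact ⟨hab, hbc.symm, Ne.symm hvb⟩
      · rintro ⟨a1, b1, c1⟩ hp1 ⟨a2, b2, c2⟩ hp2 h
        simp only [mem_filter, mem_univ, true_and, Prod.mk.injEq] at hp1 hp2
        obtain ⟨-, rfl, rfl⟩ := hp1
        obtain ⟨-, rfl, rfl⟩ := hp2
        simp_all
      · intro b hb
        simp only [hSdef, mem_filter, mem_univ, true_and] at hb
        obtain ⟨hab, hcb, hbv⟩ := hb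
        refine ⟨(a, b, c), ?_, rfl⟩
        simp only [mem_filter, mem_univ, true_and]
        exact ⟨⟨hva, hab, hcb.symm, hvc.symm, hac, Ne.symm hbv⟩, trivial⟩
    · rintro ⟨a, b, c⟩ hp
      simp only [Finset.mem_coe, mem_filter, mem_univ, true_and] at hp
      obtain ⟨hva, _, _, hcv, hac, _⟩ := hp
      simp only [Finset.mem_coe, mem_offDiag, hNdef, mem_neighborFinset]
      exact ⟨hva, hcv.symm, hac⟩
  -- Step 2 : pointwise bound
  have hSle : ∀ i ∈ N, ∀ j : V, (S i j).card ≤ d - 3 := by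
    intro i hi j
    have hsub : S i j ⊆ (G.neighborFinset i).erase v := by
      intro k hk
      simp only [hSdef, mem_filter, mem_univ, true_and] at hk
      simp only [mem_erase, mem_neighborFinset]
      exact ⟨hk.2.2, hk.1⟩
    have hvi : v ∈ G.neighborFinset i := by
      rw [mem_neighborFinset]
      exact ((mem_neighborFinset G v i).mp hi).symm
    calc (S i j).card ≤ ((G.neighborFinset i).erase v).card := Finset.card_le_card hsub
      _ = G.degree i - 1 := by rw [Finset.card_erase_of_mem hvi]; rfl
      _ ≤ d - 2 - 1 := by exact Nat.sub_le_sub_right (hmax i) 1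
      _ = d - 3 := by omega
  rw [hc4]
  by_cases hd4 : 4 ≤ d
  · -- main case
    -- uniqueness: at most one partner j with |S i j| = d - 3
    have huniq : ∀ i ∈ N, ∀ j ∈ N, ∀ j' ∈ N, j ≠ i → j' ≠ i →
        (S i j).card = d - 3 → (S i j').card = d - 3 → j = j' := by
      intro i hi j hj j' hj' hji hj'i hSj hSj'
      have hvi : G.Adj i v := ((mem_neighborFinset G v i).mp hi).symm
      have key : ∀ w ∈ N, w ≠ i → (S i w).card = d - 3 →
          G.neighborFinset i = insert v (S i w) := by
        intro w hw hwi hSw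
        have hvS : v ∉ S i w := by simp [hSdef]
        have hsub : insert v (S i w) ⊆ G.neighborFinset i := by
          intro k hk
          rcases Finset.mem_insert.mp hk with rfl | hk
          · rwa [mem_neighborFinset]
          · simp only [hSdef, mem_filter, mem_univ, true_and] at hk
            rw [mem_neighborFinset]; exact hk.1
        have hcard : (insert v (S i w)).card = d - 2 := by
          rw [Finset.card_insert_of_notMem hvS, hSw]; omega
        exact (Finset.eq_of_subset_of_card_le hsub
          (by rw [hcard]; exact hmax i)).symm
      have h1 := key j hj hji hSj
      have h2 := key j' hj' hj'i hSj'
      have hdegi : G.degree i = d - 2 := by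
        have := hmax i
        have : (insert v (S i j)).card = d - 2 := by
          rw [Finset.card_insert_of_notMem (by simp [hSdef]), hSj]; omega
        rw [SimpleGraph.degree, h1, this]
      have hnotmem : ∀ w ∈ N, w ≠ i → (S i w).card = d - 3 →
          w ∈ Finset.univ \ insert i (G.neighborFinset i) := by
        intro w hw hwi hSw
        simp only [mem_sdiff, mem_univ, true_and, Finset.mem_insert, not_or]
        refine ⟨hwi, ?_⟩
        rw [key w hw hwi hSw, Finset.mem_insert]
        push_neg
        constructor
        · intro h
          rw [h] at hw
          exact G.irrefl ((mem_neighborFinset G v v).mp hw)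
        · simp only [hSdef, mem_filter, mem_univ, true_and, not_and, not_not]
          intro _ h; exact absurd h (G.irrefl)
      have hcard1 : (Finset.univ \ insert i (G.neighborFinset i)).card ≤ 1 := by
        rw [Finset.card_sdiff_of_subset (Finset.subset_univ _), Finset.card_univ,
          Finset.card_insert_of_notMem (by simp), ← hd]
        rw [SimpleGraph.degree] at hdegi
        omega
      exact Finset.card_le_one.mp hcard1 j (hnotmem j hj hji hSj) j'
        (hnotmem j' hj' hj'i hSj')
    set P : Finset (V × V) := N.offDiag.filter (fun q => (S q.1 q.2).card = d - 3)
      with hPdef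
    have hPle : P.card ≤ δ := by
      rw [← hNcard]
      apply Finset.card_le_card_of_injOn Prod.fst
      · intro q hq
        simp only [Finset.mem_coe, hPdef, mem_filter, mem_offDiag] at hq
        exact hq.1.1
      · rintro ⟨i1, j1⟩ h1 ⟨i2, j2⟩ h2 h
        simp only at h
        subst h
        simp only [hPdef, Finset.mem_coe, mem_filter, mem_offDiag] at h1 h2
        obtain ⟨⟨hi, hj1, hne1⟩, hS1⟩ := h1
        obtain ⟨⟨-, hj2, hne2⟩, hS2⟩ := h2
        have := huniq i1 hi j1 hj1 j2 hj2 (Ne.symm hne1) (Ne.symm hne2) hS1 hS2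
        simp [this]
    have hSsymm : ∀ i j : V, S i j = S j i := by
      intro i j
      simp only [hSdef]
      apply Finset.filter_congr
      intro k _
      tauto
    have hPeven : Even P.card := by
      apply even_card_of_involution' P Prod.swap
      · rintro ⟨i, j⟩ hq
        simp only [hPdef, mem_filter, mem_offDiag] at hq ⊢
        exact ⟨⟨hq.1.2.1, hq.1.1, Ne.symm hq.1.2.2⟩, by rw [Prod.swap]; simp [hSsymm j i, hq.2]⟩
      · rintro ⟨i, j⟩ _; rfl
      · rintro ⟨i, j⟩ hq
        simp only [hPdef, mem_filter, mem_offDiag] at hq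
        simp only [Prod.swap, Ne, Prod.mk.injEq, not_and]
        intro h; exact absurd h.symm hq.1.2.2
    have hP2 : P.card ≤ 2 * (δ / 2) := by
      obtain ⟨m, hm⟩ := hPeven
      have : m + m ≤ δ := hm ▸ hPle
      have : m ≤ δ / 2 := by omega
      omega
    have hXle : X ≤ (d - 4) * (δ * (δ - 1)) + P.card := by
      have hstep : ∀ q ∈ N.offDiag, (S q.1 q.2).card ≤
          (d - 4) + (if (S q.1 q.2).card = d - 3 then 1 else 0) := by
        intro q hq
        have hi : q.1 ∈ N := (Finset.mem_offDiag.mp hq).1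
        have := hSle q.1 hi q.2
        by_cases h : (S q.1 q.2).card = d - 3 <;> simp [h] <;> omega
      calc X ≤ ∑ q ∈ N.offDiag, ((d - 4) + (if (S q.1 q.2).card = d - 3 then 1 else 0)) :=
            Finset.sum_le_sum hstep
        _ = (d - 4) * N.offDiag.card + P.card := by
            rw [Finset.sum_add_distrib, Finset.sum_const, smul_eq_mul, mul_comm,
              hPdef, Finset.card_filter]
        _ = (d - 4) * (δ * (δ - 1)) + P.card := by
            rw [Finset.offDiag_card, hNcard, Nat.mul_sub_one]
    have hchoose : δ * (δ - 1) = 2 * Nat.choose δ 2 := by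
      rw [Nat.choose_two_right]
      have h2 : 2 ∣ δ * (δ - 1) := by
        cases δ with
        | zero => simp
        | succ m =>
          simpa [Nat.succ_sub_one, mul_comm] using (Nat.even_mul_succ_self m).two_dvd
      omega
    have hfinal : X ≤ 2 * ((d - 4) * Nat.choose δ 2 + δ / 2) := by
      calc X ≤ (d - 4) * (δ * (δ - 1)) + P.card := hXle
        _ ≤ (d - 4) * (2 * Nat.choose δ 2) + 2 * (δ / 2) := by
            rw [← hchoose]; exact Nat.add_le_add_left hP2 _
        _ = 2 * ((d - 4) * Nat.choose δ 2 + δ / 2) := by ring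
    calc X / 2 ≤ 2 * ((d - 4) * Nat.choose δ 2 + δ / 2) / 2 :=
          Nat.div_le_div_right hfinal
      _ = (d - 4) * Nat.choose δ 2 + δ / 2 := Nat.mul_div_cancel_left _ (by norm_num)
  · -- small case: d ≤ 3, every S-term is 0
    have hX0 : X = 0 := by
      rw [hXdef]
      apply Finset.sum_eq_zero
      intro q hq
      have hi : q.1 ∈ N := (Finset.mem_offDiag.mp hq).1
      have := hSle q.1 hi q.2
      omega
    simp [hX0]
end

section
/- Let G be a connected graph obtained as the union of two connected graphs H₁ and H₂ sharing exactly one vertex, where H_i has p_i vertices and q_i edges. If c_4(H_i) ≤ C(q_i − p_i + 1 + ε(H_i), 2) for i = 1, 2, then c_4(G) ≤ C(e − d + 1 + ε(G), 2), where d = p₁ + p₂ − 1, e = q₁ + q₂, and ε(H) = 1 if H is bipartite and 0 otherwise. -/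
open SimpleGraph

variable {V : Type*}

open Classical in
/-- `ε(G) = 1` if `G` is bipartite and `0` otherwise. -/
noncomputable def eps {W : Type*} (G : SimpleGraph W) : ℕ :=
  if G.Colorable 2 then 1 else 0


section Aux
set_option linter.unusedSectionVars false






lemma card_split {X : Type*} [Finite X] (P : X → Prop) :
    Nat.card X = Nat.card {x : X // P x} + Nat.card {x : X // ¬ P x} := by
  classical
  rw [← Nat.card_sum]
  exact Nat.card_congr (Equiv.sumCompl P).symm

lemma card_split' {X : Type*} [Finite X] (P Q : X → Prop) :
    Nat.card {x // P x} = Nat.card {x // P x ∧ Q x} + Nat.card {x // P x ∧ ¬ Q x} := by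
  classical
  have h1 := Nat.card_congr (Equiv.subtypeSubtypeEquivSubtypeInter P Q)
  have h2 := Nat.card_congr (Equiv.subtypeSubtypeEquivSubtypeInter P (fun x => ¬ Q x))
  rw [card_split (X := {x // P x}) (fun y => Q y.1), h1, h2]

lemma card_half {X : Type*} [Finite X] (P Q R : X → Prop)
    (hdisj : ∀ x, P x → (¬ Q x ↔ R x)) (f : X → X)
    (hf : ∀ x, P x ∧ Q x → P (f x) ∧ R (f x))
    (hg : ∀ x, P x ∧ R x → P (f x) ∧ Q (f x))
    (hinv : ∀ x, f (f x) = x) :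
    Nat.card {x // P x} = 2 * Nat.card {x // P x ∧ Q x} := by
  have e1 : {x // P x ∧ Q x} ≃ {x // P x ∧ R x} :=
    ⟨fun x => ⟨f x.1, hf x.1 x.2⟩, fun x => ⟨f x.1, hg x.1 x.2⟩,
     fun x => Subtype.ext (hinv x.1), fun x => Subtype.ext (hinv x.1)⟩
  have e2 : {x // P x ∧ ¬ Q x} ≃ {x // P x ∧ R x} :=
    Equiv.subtypeEquivRight (fun x => and_congr_right (fun hp => hdisj x hp))
  have := Nat.card_congr (e2.trans e1.symm)
  rw [card_split' P Q, this]
  omega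

lemma choose_two_add_le {a b : ℕ} (ha : 1 ≤ a) (hb : 1 ≤ b) :
    a.choose 2 + b.choose 2 ≤ (a + b - 1).choose 2 := by
  obtain ⟨x, rfl⟩ := Nat.exists_eq_add_of_le ha
  obtain ⟨y, rfl⟩ := Nat.exists_eq_add_of_le hb
  have key : ∀ y x : ℕ, (1 + x).choose 2 + (1 + y).choose 2 ≤ (x + y + 1).choose 2 := by
    intro y
    induction y with
    | zero => intro x; simp [Nat.add_comm]
    | succ n ih =>
      intro x
      have h1 : (1 + (n+1)) = (1 + n) + 1 := by ring
      have h2 : (x + (n+1) + 1) = (x + n + 1) + 1 := by ring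
      rw [h1, h2, Nat.choose_succ_succ (1+n) 1, Nat.choose_succ_succ (x+n+1) 1]
      have := ih x
      simp [Nat.choose_one_right] at *
      omega
  exact le_trans (key y x) (by apply Nat.choose_le_choose; omega)



lemma card_eq_self {X : Type*} (x₀ : X) : Nat.card {x : X // x = x₀} = 1 := by
  have : Unique {x : X // x = x₀} := ⟨⟨⟨x₀, rfl⟩⟩, fun a => Subtype.ext a.2⟩
  exact Nat.card_unique


def Q0 {W : Type*} (H : SimpleGraph W) (p : W × W × W × W) : Prop :=
  H.Adj p.1 p.2.1 ∧ H.Adj p.2.1 p.2.2.1 ∧ H.Adj p.2.2.1 p.2.2.2 ∧ H.Adj p.2.2.2 p.1 ∧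
  p.1 ≠ p.2.2.1 ∧ p.2.1 ≠ p.2.2.2

lemma eight_dvd {W : Type*} [Finite W] [LinearOrder W] (H : SimpleGraph W) :
    8 ∣ Nat.card {p // Q0 H p} := by
  classical
  have s1 : Nat.card {p // Q0 H p} =
      2 * Nat.card {p // Q0 H p ∧ p.2.1 < p.2.2.2} := by
    refine card_half _ _ (fun p => p.2.2.2 < p.2.1)
      (fun p hp => ⟨fun h => lt_of_le_of_ne (not_lt.1 h) hp.2.2.2.2.2.symm, fun h => asymm h⟩)
      (fun p => (p.1, p.2.2.2, p.2.2.1, p.2.1)) ?_ ?_ (fun p => rfl)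
    · rintro p ⟨⟨h1,h2,h3,h4,h5,h6⟩, hq⟩
      exact ⟨⟨h4.symm, h3.symm, h2.symm, h1.symm, h5, h6.symm⟩, hq⟩
    · rintro p ⟨⟨h1,h2,h3,h4,h5,h6⟩, hq⟩
      exact ⟨⟨h4.symm, h3.symm, h2.symm, h1.symm, h5, h6.symm⟩, hq⟩
  have s2 : Nat.card {p // Q0 H p ∧ p.2.1 < p.2.2.2} =
      2 * Nat.card {p // (Q0 H p ∧ p.2.1 < p.2.2.2) ∧ p.1 < p.2.2.1} := by
    refine card_half _ _ (fun p => p.2.2.1 < p.1)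
      (fun p hp => ⟨fun h => lt_of_le_of_ne (not_lt.1 h) hp.1.2.2.2.2.1.symm, fun h => asymm h⟩)
      (fun p => (p.2.2.1, p.2.1, p.1, p.2.2.2)) ?_ ?_ (fun p => rfl)
    · rintro p ⟨⟨⟨h1,h2,h3,h4,h5,h6⟩, hb⟩, hq⟩
      exact ⟨⟨⟨h2.symm, h1.symm, h4.symm, h3.symm, h5.symm, h6⟩, hb⟩, hq⟩
    · rintro p ⟨⟨⟨h1,h2,h3,h4,h5,h6⟩, hb⟩, hq⟩
      exact ⟨⟨⟨h2.symm, h1.symm, h4.symm, h3.symm, h5.symm, h6⟩, hb⟩, hq⟩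
  have s3 : Nat.card {p // (Q0 H p ∧ p.2.1 < p.2.2.2) ∧ p.1 < p.2.2.1} =
      2 * Nat.card {p // ((Q0 H p ∧ p.2.1 < p.2.2.2) ∧ p.1 < p.2.2.1) ∧ p.1 < p.2.1} := by
    refine card_half _ _ (fun p => p.2.1 < p.1)
      (fun p hp => ⟨fun h => lt_of_le_of_ne (not_lt.1 h) hp.1.1.1.ne.symm, fun h => asymm h⟩)
      (fun p => (p.2.1, p.1, p.2.2.2, p.2.2.1)) ?_ ?_ (fun p => rfl)
    · rintro p ⟨⟨⟨⟨h1,h2,h3,h4,h5,h6⟩, hb⟩, hc⟩, hq⟩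
      exact ⟨⟨⟨⟨h1.symm, h4.symm, h3.symm, h2.symm, h6, h5⟩, hc⟩, hb⟩, hq⟩
    · rintro p ⟨⟨⟨⟨h1,h2,h3,h4,h5,h6⟩, hb⟩, hc⟩, hq⟩
      exact ⟨⟨⟨⟨h1.symm, h4.symm, h3.symm, h2.symm, h6, h5⟩, hc⟩, hb⟩, hq⟩
  exact ⟨_, by rw [s1, s2, s3]; ring⟩

section Split

variable {V : Type*} [Finite V] (G : SimpleGraph V) (s t : Set V) (v₀ : V)
  (hst : s ∩ t = {v₀}) (huniv : s ∪ t = Set.univ)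
  (hedges : ∀ a b : V, G.Adj a b → (a ∈ s ∧ b ∈ s) ∨ (a ∈ t ∧ b ∈ t))

include hst huniv

lemma mem_t_of_not_s {x : V} (hx : x ∉ s) : x ∈ t := by
  have h : x ∈ s ∪ t := huniv ▸ Set.mem_univ x
  rcases h with h | h
  · exact absurd h hx
  · exact h

lemma eq_v₀ {x : V} (hxs : x ∈ s) (hxt : x ∈ t) : x = v₀ := by
  have : x ∈ s ∩ t := ⟨hxs, hxt⟩
  rw [hst] at this; exact this

include hedges

lemma dich_aux {a b c d : V} (hab : G.Adj a b) (hbc : G.Adj b c) (hcd : G.Adj c d)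
    (hda : G.Adj d a) (hbd : b ≠ d) (ha : a ∉ s) :
    a ∈ t ∧ b ∈ t ∧ c ∈ t ∧ d ∈ t := by
  have h1 : a ∈ t ∧ b ∈ t := (hedges a b hab).resolve_left (fun h => ha h.1)
  have h2 : d ∈ t ∧ a ∈ t := (hedges d a hda).resolve_left (fun h => ha h.2)
  by_cases hc : c ∈ t
  · exact ⟨h1.1, h1.2, hc, h2.1⟩
  · exfalso
    have hbs : b ∈ s ∧ c ∈ s := (hedges b c hbc).resolve_right (fun h => hc h.2)
    have hds : c ∈ s ∧ d ∈ s := (hedges c d hcd).resolve_right (fun h => hc h.1)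
    have hb := eq_v₀ s t v₀ hst huniv hbs.1 h1.2
    have hd := eq_v₀ s t v₀ hst huniv hds.2 h2.1
    exact hbd (hb.trans hd.symm)

lemma dich {p : V × V × V × V} (hp : Q0 G p) :
    (p.1 ∈ s ∧ p.2.1 ∈ s ∧ p.2.2.1 ∈ s ∧ p.2.2.2 ∈ s) ∨
    (p.1 ∈ t ∧ p.2.1 ∈ t ∧ p.2.2.1 ∈ t ∧ p.2.2.2 ∈ t) := by
  obtain ⟨h1, h2, h3, h4, h5, h6⟩ := hp
  by_cases ha : p.1 ∈ s
  · by_cases hb : p.2.1 ∈ s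
    · by_cases hc : p.2.2.1 ∈ s
      · by_cases hd : p.2.2.2 ∈ s
        · exact Or.inl ⟨ha, hb, hc, hd⟩
        · obtain ⟨q1, q2, q3, q4⟩ := dich_aux G s t v₀ hst huniv hedges h4 h1 h2 h3 h5 hd
          exact Or.inr ⟨q2, q3, q4, q1⟩
      · obtain ⟨q1, q2, q3, q4⟩ := dich_aux G s t v₀ hst huniv hedges h3 h4 h1 h2 h6.symm hc
        exact Or.inr ⟨q3, q4, q1, q2⟩
    · obtain ⟨q1, q2, q3, q4⟩ := dich_aux G s t v₀ hst huniv hedges h2 h3 h4 h1 h5.symm hb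
      exact Or.inr ⟨q4, q1, q2, q3⟩
  · obtain ⟨q1, q2, q3, q4⟩ := dich_aux G s t v₀ hst huniv hedges h1 h2 h3 h4 h6 ha
    exact Or.inr ⟨q1, q2, q3, q4⟩

/-- The tuple-count splits over the two parts. -/
lemma card_Q0_split :
    Nat.card {p // Q0 G p} =
      Nat.card {p // Q0 (G.induce s) p} + Nat.card {p // Q0 (G.induce t) p} := by
  classical
  have key : Nat.card {p // Q0 G p} =
      Nat.card {p // Q0 G p ∧ (p.1 ∈ s ∧ p.2.1 ∈ s ∧ p.2.2.1 ∈ s ∧ p.2.2.2 ∈ s)} +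
      Nat.card {p // Q0 G p ∧ ¬ (p.1 ∈ s ∧ p.2.1 ∈ s ∧ p.2.2.1 ∈ s ∧ p.2.2.2 ∈ s)} :=
    card_split' _ _
  have es : {p : V × V × V × V // Q0 G p ∧ (p.1 ∈ s ∧ p.2.1 ∈ s ∧ p.2.2.1 ∈ s ∧ p.2.2.2 ∈ s)} ≃
      {p : ↥s × ↥s × ↥s × ↥s // Q0 (G.induce s) p} :=
    { toFun := fun x =>
        ⟨(⟨x.1.1, x.2.2.1⟩, ⟨x.1.2.1, x.2.2.2.1⟩, ⟨x.1.2.2.1, x.2.2.2.2.1⟩,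
          ⟨x.1.2.2.2, x.2.2.2.2.2⟩),
         ⟨x.2.1.1, x.2.1.2.1, x.2.1.2.2.1, x.2.1.2.2.2.1,
          fun h => x.2.1.2.2.2.2.1 (congrArg Subtype.val h),
          fun h => x.2.1.2.2.2.2.2 (congrArg Subtype.val h)⟩⟩
      invFun := fun y =>
        ⟨(y.1.1.1, y.1.2.1.1, y.1.2.2.1.1, y.1.2.2.2.1),
         ⟨⟨y.2.1, y.2.2.1, y.2.2.2.1, y.2.2.2.2.1,
           fun h => y.2.2.2.2.2.1 (Subtype.ext h),
           fun h => y.2.2.2.2.2.2 (Subtype.ext h)⟩,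
          y.1.1.2, y.1.2.1.2, y.1.2.2.1.2, y.1.2.2.2.2⟩⟩
      left_inv := fun x => rfl
      right_inv := fun y => rfl }
  have notboth : ∀ p : V × V × V × V, Q0 G p →
      (p.1 ∈ s ∧ p.2.1 ∈ s ∧ p.2.2.1 ∈ s ∧ p.2.2.2 ∈ s) →
      (p.1 ∈ t ∧ p.2.1 ∈ t ∧ p.2.2.1 ∈ t ∧ p.2.2.2 ∈ t) → False := by
    intro p hp hs' ht'
    have h1 := eq_v₀ s t v₀ hst huniv hs'.1 ht'.1
    have h2 := eq_v₀ s t v₀ hst huniv hs'.2.2.1 ht'.2.2.1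
    exact hp.2.2.2.2.1 (h1.trans h2.symm)
  have eiff : ∀ p : V × V × V × V,
      (Q0 G p ∧ ¬ (p.1 ∈ s ∧ p.2.1 ∈ s ∧ p.2.2.1 ∈ s ∧ p.2.2.2 ∈ s)) ↔
      (Q0 G p ∧ (p.1 ∈ t ∧ p.2.1 ∈ t ∧ p.2.2.1 ∈ t ∧ p.2.2.2 ∈ t)) := by
    intro p
    constructor
    · rintro ⟨h, hn⟩
      exact ⟨h, (dich G s t v₀ hst huniv hedges h).resolve_left hn⟩
    · rintro ⟨h, ht'⟩
      exact ⟨h, fun hs' => notboth p h hs' ht'⟩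
  have et : {p : V × V × V × V // Q0 G p ∧ ¬ (p.1 ∈ s ∧ p.2.1 ∈ s ∧ p.2.2.1 ∈ s ∧ p.2.2.2 ∈ s)} ≃
      {p : ↥t × ↥t × ↥t × ↥t // Q0 (G.induce t) p} :=
    (Equiv.subtypeEquivRight eiff).trans
    { toFun := fun x =>
        ⟨(⟨x.1.1, x.2.2.1⟩, ⟨x.1.2.1, x.2.2.2.1⟩, ⟨x.1.2.2.1, x.2.2.2.2.1⟩,
          ⟨x.1.2.2.2, x.2.2.2.2.2⟩),
         ⟨x.2.1.1, x.2.1.2.1, x.2.1.2.2.1, x.2.1.2.2.2.1,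
          fun h => x.2.1.2.2.2.2.1 (congrArg Subtype.val h),
          fun h => x.2.1.2.2.2.2.2 (congrArg Subtype.val h)⟩⟩
      invFun := fun y =>
        ⟨(y.1.1.1, y.1.2.1.1, y.1.2.2.1.1, y.1.2.2.2.1),
         ⟨⟨y.2.1, y.2.2.1, y.2.2.2.1, y.2.2.2.2.1,
           fun h => y.2.2.2.2.2.1 (Subtype.ext h),
           fun h => y.2.2.2.2.2.2 (Subtype.ext h)⟩,
          y.1.1.2, y.1.2.1.2, y.1.2.2.1.2, y.1.2.2.2.2⟩⟩
      left_inv := fun x => rfl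
      right_inv := fun y => rfl }
  rw [key, Nat.card_congr es, Nat.card_congr et]


end Split

section Conn

variable {W : Type*} [Finite W] (G : SimpleGraph W)

lemma dist_adj_le (hconn : G.Connected) {x y v₀ : W} (h : G.Adj x y) :
    G.dist x v₀ ≤ G.dist y v₀ + 1 := by
  have h1 := hconn.dist_triangle (u := x) (v := y) (w := v₀)
  have h2 : G.dist x y ≤ 1 := by
    have := G.dist_le (Walk.cons h Walk.nil)
    simpa using this
  omega

lemma parent_exists (hconn : G.Connected) (v₀ : W) {v : W} (h : v ≠ v₀) :
    ∃ u, G.Adj v u ∧ G.dist u v₀ + 1 = G.dist v v₀ := by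
  obtain ⟨p, hp⟩ := hconn.exists_walk_length_eq_dist v v₀
  cases p with
  | nil => exact absurd rfl h
  | @cons _ u _ hadj q =>
    refine ⟨u, hadj, ?_⟩
    have h1 : G.dist u v₀ ≤ q.length := G.dist_le q
    have h2 : q.length + 1 = G.dist v v₀ := by simpa [Walk.length_cons] using hp
    have h3 := dist_adj_le G hconn (v₀ := v₀) hadj
    omega

/-- For a connected graph there is an injection from non-root vertices to edges,
mapping each vertex to an edge towards the root. -/
lemma parent_inj (hconn : G.Connected) (v₀ : W) :
    ∃ f : {v : W // v ≠ v₀} → G.edgeSet, Function.Injective f ∧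
      ∀ v, ∃ u, (f v : Sym2 W) = s(v.1, u) ∧ G.dist u v₀ + 1 = G.dist v.1 v₀ := by
  classical
  choose u hadj hdist using fun (v : {v : W // v ≠ v₀}) => parent_exists G hconn v₀ v.2
  refine ⟨fun v => ⟨s(v.1, u v), (hadj v)⟩, ?_, fun v => ⟨u v, rfl, hdist v⟩⟩
  intro v w hvw
  have h : s(v.1, u v) = s(w.1, u w) := congrArg Subtype.val hvw
  rw [Sym2.eq_iff] at h
  rcases h with ⟨h1, _⟩ | ⟨h1, h2⟩
  · exact Subtype.ext h1
  · exfalso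
    have d1 := hdist v
    have d2 := hdist w
    rw [h2, h1] at d1
    omega

lemma conn_card_le (hconn : G.Connected) : Nat.card W ≤ Nat.card G.edgeSet + 1 := by
  classical
  obtain ⟨v₀⟩ := hconn.nonempty
  obtain ⟨f, hinj, -⟩ := parent_inj G hconn v₀
  have h1 := Nat.card_le_card_of_injective f hinj
  have h2 := card_split (X := W) (fun v => v = v₀)
  have h3 := card_eq_self v₀
  have h7 : Nat.card {x : W // ¬ x = v₀} = Nat.card {v : W // v ≠ v₀} := rfl
  omega

lemma conn_card_le_of_not_colorable (hconn : G.Connected) (hcol : ¬ G.Colorable 2) :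
    Nat.card W ≤ Nat.card G.edgeSet := by
  classical
  obtain ⟨v₀⟩ := hconn.nonempty
  -- find an edge with equal distances to v₀
  have hbad : ∃ x y, G.Adj x y ∧ G.dist x v₀ = G.dist y v₀ := by
    by_contra hno
    push_neg at hno
    refine hcol ⟨Coloring.mk (fun x => (⟨G.dist x v₀ % 2, by omega⟩ : Fin 2)) ?_⟩
    intro x y hadj heq
    have h1 := dist_adj_le G hconn (v₀ := v₀) hadj
    have h2 := dist_adj_le G hconn (v₀ := v₀) hadj.symm
    have h3 := hno x y hadj
    have h4 : G.dist x v₀ % 2 = G.dist y v₀ % 2 := congrArg Fin.val heq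
    omega
  obtain ⟨x, y, hxy, hdxy⟩ := hbad
  set e₀ : G.edgeSet := ⟨s(x, y), hxy⟩ with he₀
  obtain ⟨f, hinj, hf⟩ := parent_inj G hconn v₀
  have havoid : ∀ v, f v ≠ e₀ := by
    intro v hv
    obtain ⟨u, hu, hd⟩ := hf v
    have : s(v.1, u) = s(x, y) := by rw [← hu, hv]
    rw [Sym2.eq_iff] at this
    rcases this with ⟨h1, h2⟩ | ⟨h1, h2⟩ <;> · rw [h1, h2] at hd; omega
  have hinj2 : Function.Injective (fun v => (⟨f v, havoid v⟩ : {e : G.edgeSet // e ≠ e₀})) :=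
    fun v w h => hinj (congrArg Subtype.val h)
  have h1 := Nat.card_le_card_of_injective _ hinj2
  have h2 := card_split (X := W) (fun v => v = v₀)
  have h3 := card_eq_self v₀
  have h4 := card_split (X := G.edgeSet) (fun e => e = e₀)
  have h5 := card_eq_self e₀
  have h6 : Nat.card {e : G.edgeSet // ¬ e = e₀} = Nat.card {e : G.edgeSet // e ≠ e₀} := rfl
  have h7 : Nat.card {x : W // ¬ x = v₀} = Nat.card {v : W // v ≠ v₀} := rfl
  omega


end Conn

section Glue

variable {V : Type*} (G : SimpleGraph V) (s t : Set V) (v₀ : V)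
  (hst : s ∩ t = {v₀}) (huniv : s ∪ t = Set.univ)
  (hedges : ∀ a b : V, G.Adj a b → (a ∈ s ∧ b ∈ s) ∨ (a ∈ t ∧ b ∈ t))

include hst huniv hedges in
lemma glue_colorable (h1 : (G.induce s).Colorable 2) (h2 : (G.induce t).Colorable 2) :
    G.Colorable 2 := by
  classical
  have hv₀ : v₀ ∈ s ∩ t := hst ▸ rfl
  obtain ⟨hv₀s, hv₀t⟩ := hv₀
  obtain ⟨C₁⟩ := h1
  obtain ⟨C₂⟩ := h2
  have mem_t : ∀ {x : V}, x ∉ s → x ∈ t := by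
    intro x hx
    have h : x ∈ s ∪ t := huniv ▸ Set.mem_univ x
    rcases h with h | h
    · exact absurd h hx
    · exact h
  set c₂ : ↥t → Fin 2 := fun x => C₂ x + (C₁ ⟨v₀, hv₀s⟩ - C₂ ⟨v₀, hv₀t⟩) with hc₂
  set F : V → Fin 2 := fun x => if h : x ∈ s then C₁ ⟨x, h⟩ else c₂ ⟨x, mem_t h⟩ with hF
  have key : ∀ x (hx : x ∈ t), F x = c₂ ⟨x, hx⟩ := by
    intro x hx
    by_cases hxs : x ∈ s
    · have hxv : x = v₀ := by
        have : x ∈ s ∩ t := ⟨hxs, hx⟩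
        rw [hst] at this; exact this
      subst hxv
      have : F x = C₁ ⟨x, hxs⟩ := dif_pos hxs
      rw [this, hc₂]
      have hdec : ∀ x y : Fin 2, y + (x - y) = x := by decide
      exact (hdec (C₁ ⟨x, hv₀s⟩) (C₂ ⟨x, hx⟩)).symm
    · simp only [hF, dif_neg hxs]
  refine ⟨Coloring.mk F ?_⟩
  intro a b hadj heq
  rcases hedges a b hadj with ⟨has, hbs⟩ | ⟨hat, hbt⟩
  · rw [show F a = C₁ ⟨a, has⟩ from dif_pos has,
      show F b = C₁ ⟨b, hbs⟩ from dif_pos hbs] at heq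
    have hadj' : (G.induce s).Adj ⟨a, has⟩ ⟨b, hbs⟩ := by
      simp only [comap_adj, Function.Embedding.coe_subtype]
      exact hadj
    exact C₁.valid hadj' heq
  · rw [key a hat, key b hbt, hc₂] at heq
    simp only at heq
    have : C₂ ⟨a, hat⟩ = C₂ ⟨b, hbt⟩ := by
      have := add_right_cancel heq
      exact this
    have hadj' : (G.induce t).Adj ⟨a, hat⟩ ⟨b, hbt⟩ := by
      simp only [comap_adj, Function.Embedding.coe_subtype]
      exact hadj
    exact C₂.valid hadj' this


end Glue

end Aux

/-- If a connected graph `G` is the union of connected graphs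
`H₁ = G[s]` and `H₂ = G[t]` sharing exactly one vertex, with `p_i` vertices
and `q_i` edges, and `c₄(H_i) ≤ C(q_i − p_i + 1 + ε(H_i), 2)` for `i = 1,2`,
then `c₄(G) ≤ C(e − d + 1 + ε(G), 2)` where `d = p₁ + p₂ − 1`, `e = q₁ + q₂`. -/
theorem c4_one_vertex_union [Fintype V] (G : SimpleGraph V) (hconn : G.Connected)
    (s t : Set V) (v₀ : V) (hst : s ∩ t = {v₀}) (huniv : s ∪ t = Set.univ)
    (hedges : ∀ a b : V, G.Adj a b → (a ∈ s ∧ b ∈ s) ∨ (a ∈ t ∧ b ∈ t))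
    (h1conn : (G.induce s).Connected) (h2conn : (G.induce t).Connected)
    (p₁ p₂ q₁ q₂ d e : ℕ)
    (hp₁ : p₁ = Nat.card s) (hp₂ : p₂ = Nat.card t)
    (hq₁ : q₁ = edgeCount (G.induce s)) (hq₂ : q₂ = edgeCount (G.induce t))
    (hd : d = p₁ + p₂ - 1) (he : e = q₁ + q₂)
    (h1 : c4 (G.induce s) ≤ Nat.choose (q₁ + 1 + eps (G.induce s) - p₁) 2)
    (h2 : c4 (G.induce t) ≤ Nat.choose (q₂ + 1 + eps (G.induce t) - p₂) 2) :
    c4 G ≤ Nat.choose (e + 1 + eps G - d) 2 := by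
  classical
  letI : LinearOrder V := IsWellOrder.linearOrder WellOrderingRel
  have hv₀ : v₀ ∈ s ∩ t := hst ▸ rfl
  have hp₁pos : 1 ≤ p₁ := by
    rw [hp₁]; haveI : Nonempty ↥s := ⟨⟨v₀, hv₀.1⟩⟩; exact Nat.card_pos
  have hp₂pos : 1 ≤ p₂ := by
    rw [hp₂]; haveI : Nonempty ↥t := ⟨⟨v₀, hv₀.2⟩⟩; exact Nat.card_pos
  -- edge counts
  have f1 : p₁ ≤ q₁ + 1 := by
    rw [hp₁, hq₁]; exact conn_card_le _ h1conn
  have f2 : p₂ ≤ q₂ + 1 := by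
    rw [hp₂, hq₂]; exact conn_card_le _ h2conn
  -- epsilon facts
  have hε₁ : eps (G.induce s) = 1 ∧ (G.induce s).Colorable 2 ∨
      eps (G.induce s) = 0 ∧ p₁ ≤ q₁ := by
    by_cases h : (G.induce s).Colorable 2
    · exact Or.inl ⟨by simp [eps, h], h⟩
    · refine Or.inr ⟨by simp [eps, h], ?_⟩
      rw [hp₁, hq₁]; exact conn_card_le_of_not_colorable _ h1conn h
  have hε₂ : eps (G.induce t) = 1 ∧ (G.induce t).Colorable 2 ∨
      eps (G.induce t) = 0 ∧ p₂ ≤ q₂ := by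
    by_cases h : (G.induce t).Colorable 2
    · exact Or.inl ⟨by simp [eps, h], h⟩
    · refine Or.inr ⟨by simp [eps, h], ?_⟩
      rw [hp₂, hq₂]; exact conn_card_le_of_not_colorable _ h2conn h
  have hεsum : eps (G.induce s) + eps (G.induce t) ≤ 1 + eps G := by
    rcases hε₁ with ⟨he1, hc1⟩ | ⟨he1, -⟩
    · rcases hε₂ with ⟨he2, hc2⟩ | ⟨he2, -⟩
      · have : G.Colorable 2 := glue_colorable G s t v₀ hst huniv hedges hc1 hc2
        simp [he1, he2, eps, this, hc1, hc2]
      · simp [he1, he2]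
    · rcases hε₂ with ⟨he2, -⟩ | ⟨he2, -⟩ <;> simp [he1, he2]
  -- the count of 4-cycles splits
  have hc4 : c4 G = c4 (G.induce s) + c4 (G.induce t) := by
    have hsplit := card_Q0_split G s t v₀ hst huniv hedges
    obtain ⟨m, hm⟩ := eight_dvd (G.induce s)
    obtain ⟨n, hn⟩ := eight_dvd (G.induce t)
    have e1 : c4 G = Nat.card {p // Q0 G p} / 8 := rfl
    have e2 : c4 (G.induce s) = Nat.card {p // Q0 (G.induce s) p} / 8 := rfl
    have e3 : c4 (G.induce t) = Nat.card {p // Q0 (G.induce t) p} / 8 := rfl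
    rw [e1, e2, e3, hsplit, hm, hn, ← Nat.mul_add]
    simp [Nat.mul_div_cancel_left]
  -- arithmetic conclusion
  have ha : 1 ≤ q₁ + 1 + eps (G.induce s) - p₁ := by
    rcases hε₁ with ⟨he1, -⟩ | ⟨he1, hle⟩ <;> omega
  have hb : 1 ≤ q₂ + 1 + eps (G.induce t) - p₂ := by
    rcases hε₂ with ⟨he2, -⟩ | ⟨he2, hle⟩ <;> omega
  calc c4 G ≤ Nat.choose (q₁ + 1 + eps (G.induce s) - p₁) 2 +
      Nat.choose (q₂ + 1 + eps (G.induce t) - p₂) 2 := by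
        rw [hc4]; exact Nat.add_le_add h1 h2
    _ ≤ Nat.choose ((q₁ + 1 + eps (G.induce s) - p₁) +
        (q₂ + 1 + eps (G.induce t) - p₂) - 1) 2 := choose_two_add_le ha hb
    _ ≤ Nat.choose (e + 1 + eps G - d) 2 := Nat.choose_le_choose 2 (by omega)
end
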